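/- arXiv:1303.6409 — 2 statements merged into one kernel-verified Lean document; each statement's English description precedes it below -/
import Mathlib

section
/- Let X be a random variable on a standard probability space, let g and h be measurable functions, and set Y = g(X) and Z = h(Y). Then the information loss of the cascade is additive: L(X→Z) = L(X→Y) + L(Y→Z); equivalently, H(X|Z) = H(X|Y) + H(Y|Z). -/
open MeasureTheory ProbabilityTheory Filter Set
open scoped ENNReal Topology

noncomputable section

/-- Base-2 entropy of the discrete (atomic) part of a measure. -/
def pmfEntropy {β : Type*} [MeasurableSpace β] (ν : Measure β) : ℝ≥0∞ :=
  ∑' b : β, ENNReal.ofReal (-((ν {b}).toReal * Real.logb 2 (ν {b}).toReal))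

/-- Conditional entropy `H(X | Y)` (of a discretely supported `X`) given `Y`,
computed through the regular conditional distribution of `X` given `Y`. -/
def condEnt {α β γ : Type*} [MeasurableSpace α] [MeasurableSpace β] [StandardBorelSpace β]
    [Nonempty β] [MeasurableSpace γ] (μ : Measure α) [IsFiniteMeasure μ]
    (X : α → β) (Y : α → γ) : ℝ≥0∞ :=
  ∫⁻ y, pmfEntropy (condDistrib X Y μ y) ∂(μ.map Y)

/-- Componentwise uniform quantization `X̂ₙ = ⌊2ⁿ X⌋ / 2ⁿ`. -/
def quant {ι : Type*} (n : ℕ) (x : ι → ℝ) : ι → ℝ :=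
  fun i => (⌊(2 : ℝ) ^ n * x i⌋ : ℝ) / (2 : ℝ) ^ n

/-- `H(X̂ₙ)`, entropy of the quantized input. -/
def entQ {α ι : Type*} [MeasurableSpace α] [Fintype ι] (μ : Measure α)
    (X : α → ι → ℝ) (n : ℕ) : ℝ≥0∞ :=
  pmfEntropy (μ.map fun a => quant n (X a))

/-- `H(X̂ₙ | Y)`. -/
def condEntQ {α ι γ : Type*} [MeasurableSpace α] [Fintype ι] [MeasurableSpace γ]
    (μ : Measure α) [IsFiniteMeasure μ] (X : α → ι → ℝ) (Y : α → γ) (n : ℕ) : ℝ≥0∞ :=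
  condEnt μ (fun a => quant n (X a)) Y

/-- Information loss `L(X→Y) = H(X|Y) = limₙ H(X̂ₙ|Y)`; since the sequence
`H(X̂ₙ|Y)` is nondecreasing in `n` the limit equals the supremum. -/
def infoLoss {α ι γ : Type*} [MeasurableSpace α] [Fintype ι] [MeasurableSpace γ]
    (μ : Measure α) [IsFiniteMeasure μ] (X : α → ι → ℝ) (Y : α → γ) : ℝ≥0∞ :=
  ⨆ n : ℕ, condEntQ μ X Y n

/-- The sequence `H(X̂ₙ|Y)/H(X̂ₙ)` whose limit is the relative information loss. -/
def relLossSeq {α ι γ : Type*} [MeasurableSpace α] [Fintype ι] [MeasurableSpace γ]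
    (μ : Measure α) [IsFiniteMeasure μ] (X : α → ι → ℝ) (Y : α → γ) (n : ℕ) : ℝ :=
  (condEntQ μ X Y n).toReal / (entQ μ X n).toReal

/-- The sequence `I(X̂ₙ;Y)/H(X̂ₙ) = (H(X̂ₙ) - H(X̂ₙ|Y))/H(X̂ₙ)` whose limit is the
relative information transfer. -/
def relTransSeq {α ι γ : Type*} [MeasurableSpace α] [Fintype ι] [MeasurableSpace γ]
    (μ : Measure α) [IsFiniteMeasure μ] (X : α → ι → ℝ) (Y : α → γ) (n : ℕ) : ℝ :=
  ((entQ μ X n).toReal - (condEntQ μ X Y n).toReal) / (entQ μ X n).toReal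

/-- `H(ν̂ₙ)` for a measure on `ℝᴺ` (quantized entropy of a distribution). -/
def entQM {ι : Type*} [Fintype ι] (ν : Measure (ι → ℝ)) (n : ℕ) : ℝ≥0∞ :=
  pmfEntropy (ν.map (quant n))



/-! ### The function `phiEnt` -/

def phiEnt (p : ℝ≥0∞) : ℝ≥0∞ := ENNReal.ofReal (-(p.toReal * Real.logb 2 p.toReal))

def glogEnt (p : ℝ≥0∞) : ℝ≥0∞ := ENNReal.ofReal (-(Real.logb 2 p.toReal))

lemma pmfEntropy_eq_tsum {β : Type*} [MeasurableSpace β] (ν : Measure β) :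
    pmfEntropy ν = ∑' b : β, phiEnt (ν {b}) := rfl

@[simp] lemma phiEnt_zero : phiEnt 0 = 0 := by simp [phiEnt]

@[simp] lemma phiEnt_top : phiEnt ∞ = 0 := by simp [phiEnt]

lemma phiEnt_eq_mul (p : ℝ≥0∞) : phiEnt p = p * glogEnt p := by
  by_cases hp : p = ∞
  · simp [hp, phiEnt, glogEnt]
  · have h0 : (0:ℝ) ≤ p.toReal := ENNReal.toReal_nonneg
    rw [phiEnt, glogEnt, show -(p.toReal * Real.logb 2 p.toReal)
      = p.toReal * (-(Real.logb 2 p.toReal)) by ring, ENNReal.ofReal_mul h0,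
      ENNReal.ofReal_toReal hp]

/-- The real function `x ↦ -(x * logb 2 x)`. -/
lemma phiR_nonneg {x : ℝ} (h0 : 0 ≤ x) (h1 : x ≤ 1) : 0 ≤ -(x * Real.logb 2 x) := by
  have := Real.logb_nonpos (b := 2) one_lt_two h0 h1
  nlinarith

lemma phiR_add_le {x y : ℝ} (hx : 0 ≤ x) (hy : 0 ≤ y) :
    -((x + y) * Real.logb 2 (x + y)) ≤ -(x * Real.logb 2 x) + -(y * Real.logb 2 y) := by
  rcases eq_or_lt_of_le hx with h | hx'
  · simp [← h]
  rcases eq_or_lt_of_le hy with h | hy'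
  · simp [← h]
  have hxy : (0:ℝ) < x + y := by linarith
  have h1 : x * Real.logb 2 x ≤ x * Real.logb 2 (x + y) :=
    mul_le_mul_of_nonneg_left (((Real.logb_le_logb one_lt_two hx' (by linarith : (0:ℝ) < x + y)).mpr (by linarith))) hx
  have h2 : y * Real.logb 2 y ≤ y * Real.logb 2 (x + y) :=
    mul_le_mul_of_nonneg_left (((Real.logb_le_logb one_lt_two hy' (by linarith : (0:ℝ) < x + y)).mpr (by linarith))) hy
  nlinarith [add_mul x y (Real.logb 2 (x+y))]

lemma phiEnt_add_le (p q : ℝ≥0∞) : phiEnt (p + q) ≤ phiEnt p + phiEnt q := by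
  by_cases hp : p = ∞
  · simp [hp]
  by_cases hq : q = ∞
  · simp [hq]
  have h : (p + q).toReal = p.toReal + q.toReal := ENNReal.toReal_add hp hq
  calc phiEnt (p + q) = ENNReal.ofReal (-((p.toReal + q.toReal) *
        Real.logb 2 (p.toReal + q.toReal))) := by rw [phiEnt, h]
    _ ≤ ENNReal.ofReal (-(p.toReal * Real.logb 2 p.toReal) +
        -(q.toReal * Real.logb 2 q.toReal)) :=
      ENNReal.ofReal_le_ofReal (phiR_add_le ENNReal.toReal_nonneg ENNReal.toReal_nonneg)
    _ ≤ phiEnt p + phiEnt q := ENNReal.ofReal_add_le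

lemma continuousAt_phiEnt {p : ℝ≥0∞} (hp : p ≠ ∞) : ContinuousAt phiEnt p := by
  have h1 : ContinuousAt ENNReal.toReal p := ENNReal.tendsto_toReal hp
  have h2 : Continuous fun x : ℝ => ENNReal.ofReal (-(x * Real.logb 2 x)) := by
    have : (fun x : ℝ => ENNReal.ofReal (-(x * Real.logb 2 x)))
        = fun x : ℝ => ENNReal.ofReal (Real.negMulLog x / Real.log 2) := by
      funext x
      congr 1
      rw [Real.negMulLog, Real.logb]
      ring
    rw [this]
    exact ENNReal.continuous_ofReal.comp (Real.continuous_negMulLog.div_const _)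
  exact h2.continuousAt.comp h1

lemma phiEnt_tsum_le {ι' : Type*} (f : ι' → ℝ≥0∞) : phiEnt (∑' i, f i) ≤ ∑' i, phiEnt (f i) := by
  by_cases htop : ∑' i, f i = ∞
  · simp [htop]
  have hfin : ∀ F : Finset ι', phiEnt (∑ i ∈ F, f i) ≤ ∑ i ∈ F, phiEnt (f i) := by
    intro F
    classical
    induction F using Finset.induction_on with
    | empty => simp
    | insert a s hni ih =>
      rw [Finset.sum_insert hni, Finset.sum_insert hni]
      exact (phiEnt_add_le _ _).trans (add_le_add le_rfl ih)
  have hs : Tendsto (fun F : Finset ι' => ∑ i ∈ F, f i) atTop (𝓝 (∑' i, f i)) :=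
    ENNReal.summable.hasSum
  have hphi : Tendsto (fun F : Finset ι' => phiEnt (∑ i ∈ F, f i)) atTop
      (𝓝 (phiEnt (∑' i, f i))) := (continuousAt_phiEnt htop).tendsto.comp hs
  refine le_of_tendsto hphi (Eventually.of_forall fun F => ?_)
  exact (hfin F).trans (ENNReal.sum_le_tsum F)

lemma phiEnt_mul {p q : ℝ≥0∞} (hp : p ≤ 1) (hq : q ≤ 1) :
    phiEnt (p * q) = q * phiEnt p + p * phiEnt q := by
  have hp' : p ≠ ∞ := (hp.trans_lt (by norm_num)).ne
  have hq' : q ≠ ∞ := (hq.trans_lt (by norm_num)).ne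
  have hp1 : p.toReal ≤ 1 := by
    simpa using (ENNReal.toReal_mono (by norm_num) hp)
  have hq1 : q.toReal ≤ 1 := by
    simpa using (ENNReal.toReal_mono (by norm_num) hq)
  have hpr : (0:ℝ) ≤ p.toReal := ENNReal.toReal_nonneg
  have hqr : (0:ℝ) ≤ q.toReal := ENNReal.toReal_nonneg
  have key : -((p.toReal * q.toReal) * Real.logb 2 (p.toReal * q.toReal))
      = q.toReal * (-(p.toReal * Real.logb 2 p.toReal))
        + p.toReal * (-(q.toReal * Real.logb 2 q.toReal)) := by
    rcases eq_or_lt_of_le hpr with h | hp0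
    · simp [← h]
    rcases eq_or_lt_of_le hqr with h | hq0
    · simp [← h]
    rw [Real.logb_mul hp0.ne' hq0.ne']
    ring
  rw [phiEnt, ENNReal.toReal_mul, key, ENNReal.ofReal_add
    (mul_nonneg hqr (phiR_nonneg hpr hp1)) (mul_nonneg hpr (phiR_nonneg hqr hq1)),
    ENNReal.ofReal_mul hqr, ENNReal.ofReal_mul hpr,
    ENNReal.ofReal_toReal hq', ENNReal.ofReal_toReal hp']
  rfl


section Atomic
variable {β : Type*} [MeasurableSpace β] [MeasurableSingletonClass β]

lemma meas_countable_eq_tsum {ν : Measure β} {s : Set β} (hc : s.Countable) :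
    ν s = ∑' x : s, ν {(x : β)} := by
  conv_lhs => rw [show s = ⋃ x ∈ s, ({x} : Set β) by simp]
  exact measure_biUnion hc
    (fun a _ b _ hab => by simpa [Set.disjoint_singleton] using hab)
    fun b _ => measurableSet_singleton _

lemma tsum_meas_singleton_le (ν : Measure β) (s : Set β) :
    ∑' x : s, ν {(x : β)} ≤ ν s := by
  rw [ENNReal.tsum_eq_iSup_sum]
  refine iSup_le fun F => ?_
  have hd : (↑F : Set s).PairwiseDisjoint (fun x : s => ({(x : β)} : Set β)) := by
    intro a _ b _ hab
    simpa [Set.disjoint_singleton] using fun h => hab (Subtype.coe_injective h)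
  rw [← measure_biUnion_finset hd fun _ _ => measurableSet_singleton _]
  refine measure_mono ?_
  simp only [iUnion_subset_iff, singleton_subset_iff]
  exact fun x _ => x.2

lemma tsum_meas_singleton_le' (ν : Measure β) : ∑' x : β, ν {x} ≤ ν univ := by
  rw [← tsum_univ fun x : β => ν {x}]
  exact tsum_meas_singleton_le ν univ

/-- A measure is purely atomic if the total mass of its atoms is its full mass. -/
def IsPAtomic (ν : Measure β) : Prop := ∑' x : β, ν {x} = ν univ

lemma countable_atoms (ν : Measure β) [IsFiniteMeasure ν] :
    {x : β | ν {x} ≠ 0}.Countable := by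
  have h : ∑' x : β, ν {x} ≠ ∞ :=
    ((tsum_meas_singleton_le' ν).trans_lt (measure_lt_top ν univ)).ne
  simpa [Function.support] using Summable.countable_support_ennreal h

lemma meas_compl_atoms_eq_zero {ν : Measure β} [IsFiniteMeasure ν] (h : IsPAtomic ν) :
    ν {x : β | ν {x} ≠ 0}ᶜ = 0 := by
  set A := {x : β | ν {x} ≠ 0} with hA
  have hAc : A.Countable := countable_atoms ν
  have hAm : MeasurableSet A := hAc.measurableSet
  have h1 : ν A = ∑' x : A, ν {(x : β)} := meas_countable_eq_tsum hAc
  have h2 : ∑' x : A, ν {(x : β)} = ∑' x : β, ν {x} :=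
    tsum_subtype_eq_of_support_subset fun x hx => hx
  have h4 : ν A + ν Aᶜ = ν A + 0 := by
    rw [add_zero, measure_add_measure_compl hAm, ← h, h1, h2]
  exact (ENNReal.add_right_inj (measure_lt_top ν A).ne).mp h4

lemma IsPAtomic.meas_eq {ν : Measure β} [IsFiniteMeasure ν] (h : IsPAtomic ν)
    {s : Set β} (hs : MeasurableSet s) : ν s = ∑' x : s, ν {(x : β)} := by
  set A := {x : β | ν {x} ≠ 0} with hA
  have hAc : A.Countable := countable_atoms ν
  have hAm : MeasurableSet A := hAc.measurableSet
  have hsplit : ν s = ν (s ∩ A) + ν (s ∩ Aᶜ) := by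
    rw [← diff_eq, measure_inter_add_diff s hAm]
  have hz : ν (s ∩ Aᶜ) = 0 :=
    measure_mono_null inter_subset_right (meas_compl_atoms_eq_zero h)
  have h1 : ν (s ∩ A) = ∑' x : (s ∩ A : Set β), ν {(x : β)} :=
    meas_countable_eq_tsum (hAc.mono inter_subset_right)
  have h2 : ∑' x : (s ∩ A : Set β), ν {(x : β)} = ∑' x : s, ν {(x : β)} := by
    rw [tsum_subtype (s ∩ A : Set β) fun y : β => ν {y}, tsum_subtype s fun y : β => ν {y}]
    refine tsum_congr fun x => ?_
    by_cases hxs : x ∈ s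
    · by_cases hxA : x ∈ A
      · rw [indicator_of_mem (mem_inter hxs hxA), indicator_of_mem hxs]
      · rw [indicator_of_notMem (fun hc => hxA hc.2), indicator_of_mem hxs]
        exact (not_not.mp hxA).symm
    · rw [indicator_of_notMem (fun hc => hxs hc.1), indicator_of_notMem hxs]
  rw [hsplit, hz, add_zero, h1, h2]

lemma isPAtomic_map {β' : Type*} [MeasurableSpace β'] [MeasurableSingletonClass β']
    (ν : Measure β) {q : β → β'} (hq : Measurable q) (hD : (range q).Countable) :
    IsPAtomic (ν.map q) := by
  refine le_antisymm (tsum_meas_singleton_le' _) ?_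
  have huniv : (ν.map q) univ = ν univ := by
    rw [Measure.map_apply hq MeasurableSet.univ, preimage_univ]
  have hbiU : ν univ = ν (⋃ c ∈ range q, q ⁻¹' {c}) := by
    congr 1
    ext x
    simp only [mem_univ, true_iff, mem_iUnion, mem_preimage, mem_singleton_iff]
    exact ⟨q x, mem_range_self x, rfl⟩
  have h1 : ν (⋃ c ∈ range q, q ⁻¹' {c}) = ∑' c : range q, ν (q ⁻¹' {(c : β')}) :=
    measure_biUnion hD (fun a _ b _ hab => by
      refine Set.disjoint_left.mpr fun x hxa hxb => hab ?_
      simp only [mem_preimage, mem_singleton_iff] at hxa hxb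
      rw [← hxa, ← hxb])
      fun b _ => hq (measurableSet_singleton _)
  have h2 : ∀ c : range q, ν (q ⁻¹' {(c : β')}) = (ν.map q) {(c : β')} := fun c =>
    (Measure.map_apply hq (measurableSet_singleton _)).symm
  calc (ν.map q) univ = ∑' c : range q, (ν.map q) {(c : β')} := by
        rw [huniv, hbiU, h1]; exact tsum_congr h2
    _ ≤ ∑' c : β', (ν.map q) {c} := by
        rw [tsum_subtype (range q) fun c : β' => (ν.map q) {c}]
        exact Summable.tsum_le_tsum (fun c => indicator_le_self _ _ c) ENNReal.summable ENNReal.summable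

lemma IsPAtomic.lintegral_eq {ν : Measure β} [IsFiniteMeasure ν] (h : IsPAtomic ν)
    (f : β → ℝ≥0∞) : ∫⁻ x, f x ∂ν = ∑' x : β, ν {x} * f x := by
  set A := {x : β | ν {x} ≠ 0} with hA
  have hAc : A.Countable := countable_atoms ν
  haveI := hAc.to_subtype
  have hνeq : ν = Measure.sum (fun x : A => ν {(x : β)} • Measure.dirac (x : β)) := by
    ext s hs
    rw [Measure.sum_apply _ hs]
    have hterm : ∀ x : A, (ν {(x : β)} • Measure.dirac (x : β)) s
        = s.indicator (fun y => ν {y}) (x : β) := by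
      intro x
      rw [Measure.smul_apply, smul_eq_mul, Measure.dirac_apply' _ hs]
      by_cases hx : (x : β) ∈ s
      · simp [hx, indicator_of_mem]
      · simp [hx, indicator_of_notMem]
    rw [tsum_congr hterm, tsum_subtype_eq_of_support_subset ?_, ← tsum_subtype s fun y => ν {y}]
    · exact h.meas_eq hs
    · intro x hx
      rw [Function.mem_support] at hx
      by_cases hxs : x ∈ s
      · rw [indicator_of_mem hxs] at hx
        exact hx
      · rw [indicator_of_notMem hxs] at hx
        exact absurd rfl hx
  conv_lhs => rw [hνeq]
  rw [lintegral_sum_measure]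
  have hterm2 : ∀ x : A, ∫⁻ y, f y ∂(ν {(x : β)} • Measure.dirac (x : β))
      = ν {(x : β)} * f (x : β) := by
    intro x
    rw [lintegral_smul_measure, lintegral_dirac, smul_eq_mul]
  rw [tsum_congr hterm2]
  refine tsum_subtype_eq_of_support_subset (f := fun x : β => ν {x} * f x) (s := A) fun x hx => ?_
  rw [Function.mem_support] at hx
  show ν {x} ≠ 0
  exact fun h0 => hx (by simp [h0])

end Atomic

section Quant
variable {ι : Type*} [Fintype ι]

lemma measurable_quant (n : ℕ) : Measurable (quant (ι := ι) n) := by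
  refine measurable_pi_lambda _ fun i => ?_
  have h1 : Measurable fun x : ι → ℝ => ⌊(2:ℝ)^n * x i⌋ :=
    ((measurable_pi_apply i).const_mul _).floor
  exact ((measurable_of_countable (fun k : ℤ => ((k:ℝ)/(2:ℝ)^n))).comp h1)

lemma range_quant_countable (n : ℕ) : (range (quant (ι := ι) n)).Countable := by
  have : range (quant (ι := ι) n) ⊆ range (fun k : ι → ℤ => fun i => ((k i : ℝ)/(2:ℝ)^n)) := by
    rintro _ ⟨x, rfl⟩
    exact ⟨fun i => ⌊(2:ℝ)^n * x i⌋, rfl⟩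
  exact (countable_range _).mono this

lemma floor_floor_div_two (y : ℝ) : ⌊(⌊y⌋ : ℝ) / 2⌋ = ⌊y / 2⌋ := by
  set m := ⌊y / 2⌋ with hm
  have h1 : (m : ℝ) ≤ y / 2 := Int.floor_le _
  have h2 : y / 2 < m + 1 := Int.lt_floor_add_one _
  have h3 : (2 * m : ℤ) ≤ ⌊y⌋ := Int.le_floor.mpr (by push_cast; linarith)
  have h4 : ⌊y⌋ < 2 * m + 2 := Int.floor_lt.mpr (by push_cast; linarith)
  rw [Int.floor_eq_iff]
  have h5 : ⌊y⌋ ≤ 2 * m + 1 := by omega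
  have h3' : (2 * (m:ℝ)) ≤ (⌊y⌋ : ℝ) := by exact_mod_cast h3
  have h5' : ((⌊y⌋ : ℝ)) ≤ 2 * m + 1 := by exact_mod_cast h5
  constructor <;> [linarith; linarith]

lemma quant_quant_succ (n : ℕ) (x : ι → ℝ) : quant n (quant (n+1) x) = quant n x := by
  funext i
  show (⌊(2:ℝ)^n * ((⌊(2:ℝ)^(n+1) * x i⌋ : ℝ) / (2:ℝ)^(n+1))⌋ : ℝ) / (2:ℝ)^n
      = (⌊(2:ℝ)^n * x i⌋ : ℝ) / (2:ℝ)^n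
  congr 2
  have h2 : (2:ℝ)^n * ((⌊(2:ℝ)^(n+1) * x i⌋ : ℝ) / (2:ℝ)^(n+1))
      = (⌊(2:ℝ)^(n+1) * x i⌋ : ℝ) / 2 := by
    rw [pow_succ]
    field_simp
  rw [h2, floor_floor_div_two]
  congr 1
  rw [pow_succ]
  field_simp

lemma quant_comp_succ (n : ℕ) : quant (ι := ι) n ∘ quant (n+1) = quant n :=
  funext (quant_quant_succ n)

lemma quant_le_dist (n : ℕ) (x : ι → ℝ) (i : ι) : |x i - quant n x i| < 1 / 2^n := by
  have hpos : (0:ℝ) < 2^n := by positivity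
  have h1 : (⌊(2:ℝ)^n * x i⌋ : ℝ) ≤ 2^n * x i := Int.floor_le _
  have h2 : (2:ℝ)^n * x i < ⌊(2:ℝ)^n * x i⌋ + 1 := Int.lt_floor_add_one _
  rw [abs_sub_lt_iff]
  have hle : (⌊(2:ℝ)^n * x i⌋ : ℝ) / 2^n ≤ x i := by
    rw [div_le_iff₀ hpos]
    linarith [mul_comm ((2:ℝ)^n) (x i)]
  have hlt : x i < (⌊(2:ℝ)^n * x i⌋ : ℝ) / 2^n + 1 / 2^n := by
    rw [← add_div, lt_div_iff₀ hpos]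
    linarith [mul_comm ((2:ℝ)^n) (x i)]
  have h01 : (0:ℝ) < 1 / 2^n := by positivity
  constructor
  · show x i - (⌊(2:ℝ)^n * x i⌋ : ℝ) / 2^n < 1 / 2^n
    linarith
  · show (⌊(2:ℝ)^n * x i⌋ : ℝ) / 2^n - x i < 1 / 2^n
    linarith

lemma mem_cell_iff {n : ℕ} {x y : ι → ℝ} :
    y ∈ quant (ι := ι) n ⁻¹' {quant n x} ↔ quant n y = quant n x := Iff.rfl

lemma cell_antitone (x : ι → ℝ) : Antitone fun n => quant (ι := ι) n ⁻¹' {quant n x} := by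
  refine antitone_nat_of_succ_le fun n y hy => ?_
  have hy' : quant (n+1) y = quant (n+1) x := hy
  show quant n y = quant n x
  rw [← quant_quant_succ n y, hy', quant_quant_succ]

lemma iInter_cell (x : ι → ℝ) : ⋂ n, quant (ι := ι) n ⁻¹' {quant n x} = {x} := by
  refine subset_antisymm ?_ ?_
  · intro y hy
    simp only [mem_iInter, mem_preimage, mem_singleton_iff] at hy
    have key : ∀ i, y i = x i := by
      intro i
      by_contra hne
      have hd : 0 < |y i - x i| := abs_pos.mpr (sub_ne_zero.mpr hne)
      obtain ⟨n, hn⟩ := exists_pow_lt_of_lt_one (x := |y i - x i| / 2) (y := (1:ℝ)/2)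
        (by linarith) (by norm_num)
      have h1 : |y i - quant n y i| < 1 / 2^n := quant_le_dist n y i
      have h2 : |x i - quant n x i| < 1 / 2^n := quant_le_dist n x i
      have h3 : quant n y i = quant n x i := by rw [hy n]
      have h4 : ((1:ℝ)/2)^n = 1/2^n := by rw [div_pow, one_pow]
      have : |y i - x i| ≤ |y i - quant n y i| + |x i - quant n x i| := by
        rw [h3]
        have := abs_sub (y i - quant n x i) (x i - quant n x i)
        calc |y i - x i| = |(y i - quant n x i) - (x i - quant n x i)| := by ring_nf
          _ ≤ |y i - quant n x i| + |x i - quant n x i| := abs_sub _ _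
      rw [h4] at hn
      linarith
    exact funext key
  · rintro y rfl
    exact mem_iInter.mpr fun n => rfl

end Quant


section HatH

open Classical in
/-- Entropy of the discrete part, or `∞` if the measure is not purely atomic. -/
def hatH {β : Type*} [MeasurableSpace β] (ν : Measure β) : ℝ≥0∞ :=
  if IsPAtomic ν then pmfEntropy ν else ∞

lemma hatH_of_patomic {β : Type*} [MeasurableSpace β] {ν : Measure β} (h : IsPAtomic ν) :
    hatH ν = pmfEntropy ν := if_pos h

lemma hatH_of_not_patomic {β : Type*} [MeasurableSpace β] {ν : Measure β} (h : ¬ IsPAtomic ν) :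
    hatH ν = ∞ := if_neg h

variable {β β' : Type*} [MeasurableSpace β] [MeasurableSingletonClass β]
  [MeasurableSpace β'] [MeasurableSingletonClass β']

lemma pmfEntropy_map_eq {q : β → β'} (hq : Measurable q) (hD : (range q).Countable)
    (ν : Measure β) :
    pmfEntropy (ν.map q) = ∑' c : range q, phiEnt (ν (q ⁻¹' {(c : β')})) := by
  rw [pmfEntropy_eq_tsum,
    ← tsum_subtype_eq_of_support_subset (s := range q)
      (f := fun b : β' => phiEnt ((ν.map q) {b})) ?_]
  · exact tsum_congr fun c => by rw [Measure.map_apply hq (measurableSet_singleton _)]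
  · intro c hc
    rw [Function.mem_support] at hc
    by_contra hcr
    refine hc ?_
    have : q ⁻¹' {c} = ∅ := by
      ext x; simp only [mem_preimage, mem_singleton_iff, mem_empty_iff_false, iff_false]
      exact fun h => hcr ⟨x, h⟩
    rw [Measure.map_apply hq (measurableSet_singleton _), this, measure_empty, phiEnt_zero]

lemma pmfEntropy_map_le {ν : Measure β} [IsFiniteMeasure ν] (hν : IsPAtomic ν)
    {f : β → β'} (hf : Measurable f) : pmfEntropy (ν.map f) ≤ pmfEntropy ν := by
  rw [pmfEntropy_eq_tsum, pmfEntropy_eq_tsum]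
  calc ∑' b : β', phiEnt ((ν.map f) {b}) = ∑' b : β', phiEnt (ν (f ⁻¹' {b})) := by
        exact tsum_congr fun b => by rw [Measure.map_apply hf (measurableSet_singleton _)]
    _ ≤ ∑' b : β', ∑' x : f ⁻¹' {b}, phiEnt (ν {(x : β)}) := by
        refine Summable.tsum_le_tsum (fun b => ?_) ENNReal.summable ENNReal.summable
        rw [hν.meas_eq (hf (measurableSet_singleton _))]
        exact phiEnt_tsum_le _
    _ = ∑' x : β, phiEnt (ν {x}) := ENNReal.tsum_fiberwise (fun x => phiEnt (ν {x})) f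

end HatH

section LemmaE
variable {ι : Type*} [Fintype ι] (ν : Measure (ι → ℝ)) [IsFiniteMeasure ν]

lemma pmfEntropy_quant_mono (n : ℕ) :
    pmfEntropy (ν.map (quant n)) ≤ pmfEntropy (ν.map (quant (n+1))) := by
  rw [← quant_comp_succ n, ← Measure.map_map (measurable_quant n) (measurable_quant (n+1))]
  exact pmfEntropy_map_le
    (isPAtomic_map ν (measurable_quant _) (range_quant_countable _)) (measurable_quant n)

/-- The function `x ↦ -log₂ ν(cell_n(x))` as a countable sum of indicators. -/
lemma cellFn_eq_tsum (n : ℕ) : (fun x => glogEnt (ν (quant n ⁻¹' {quant n x})))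
    = fun x => ∑' c : range (quant (ι := ι) n),
      (quant n ⁻¹' {(c : ι → ℝ)}).indicator
        (fun _ => glogEnt (ν (quant n ⁻¹' {(c : ι → ℝ)}))) x := by
  funext x
  haveI := (range_quant_countable (ι := ι) n).to_subtype
  rw [tsum_eq_single (⟨quant n x, mem_range_self x⟩ : range (quant (ι := ι) n)) ?_]
  · rw [indicator_of_mem (by exact rfl)]
  · intro c hc
    rw [indicator_of_notMem]
    intro hxc
    refine hc ?_
    have : quant n x = (c : ι → ℝ) := hxc
    exact Subtype.ext this.symm

lemma measurable_cellFn (n : ℕ) :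
    Measurable fun x => glogEnt (ν (quant n ⁻¹' {quant n x})) := by
  rw [cellFn_eq_tsum]
  haveI := (range_quant_countable (ι := ι) n).to_subtype
  exact Measurable.ennreal_tsum fun c =>
    Measurable.indicator measurable_const (measurable_quant n (measurableSet_singleton _))

lemma lintegral_cellFn (n : ℕ) :
    ∫⁻ x, glogEnt (ν (quant n ⁻¹' {quant n x})) ∂ν = pmfEntropy (ν.map (quant n)) := by
  haveI := (range_quant_countable (ι := ι) n).to_subtype
  rw [cellFn_eq_tsum, lintegral_tsum (fun c => (Measurable.indicator measurable_const
    (measurable_quant n (measurableSet_singleton _))).aemeasurable),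
    pmfEntropy_map_eq (measurable_quant n) (range_quant_countable n)]
  refine tsum_congr fun c => ?_
  rw [lintegral_indicator (measurable_quant n (measurableSet_singleton _)),
    setLIntegral_const, phiEnt_eq_mul, mul_comm]

theorem hatH_eq_iSup_pmfEntropy_quant :
    hatH ν = ⨆ n, pmfEntropy (ν.map (quant n)) := by
  refine le_antisymm ?_ ?_
  · -- `hatH ν ≤ ⨆ n …` via Fatou along the dyadic cells
    set T : (ι → ℝ) → ℝ≥0∞ := fun x => if ν {x} = 0 then ∞ else glogEnt (ν {x}) with hT
    have step1 : ∀ᵐ x ∂ν, T x ≤ liminf (fun n => glogEnt (ν (quant n ⁻¹' {quant n x}))) atTop := by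
      have hBn : ∀ n : ℕ, ν (⋃ c ∈ {c ∈ range (quant (ι := ι) n) |
          ν (quant n ⁻¹' {c}) = 0}, quant n ⁻¹' {c}) = 0 := by
        intro n
        refine (measure_biUnion_null_iff ((range_quant_countable n).mono (sep_subset _ _))).mpr ?_
        exact fun c hc => hc.2
      have hB : ν (⋃ n : ℕ, ⋃ c ∈ {c ∈ range (quant (ι := ι) n) |
          ν (quant n ⁻¹' {c}) = 0}, quant n ⁻¹' {c}) = 0 := measure_iUnion_null hBn
      refine eventually_of_mem (compl_mem_ae_iff.mpr hB) fun x hx => ?_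
      have hcell : ∀ n : ℕ, ν (quant n ⁻¹' {quant n x}) ≠ 0 := by
        intro n h0
        refine hx ?_
        exact mem_iUnion.mpr ⟨n, mem_biUnion (⟨mem_range_self x, h0⟩ : quant n x ∈ {c ∈ range (quant (ι := ι) n) | ν (quant n ⁻¹' {c}) = 0}) rfl⟩
      have htend : Tendsto (fun n => ν (quant n ⁻¹' {quant n x})) atTop (𝓝 (ν {x})) := by
        have := tendsto_measure_iInter_atTop (μ := ν)
          (s := fun n => quant n ⁻¹' {quant n x})
          (fun n => ((measurable_quant n) (measurableSet_singleton _)).nullMeasurableSet)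
          (cell_antitone x) ⟨0, (measure_lt_top ν _).ne⟩
        rwa [iInter_cell x] at this
      by_cases hx0 : ν {x} = 0
      · have htop : Tendsto (fun n => glogEnt (ν (quant n ⁻¹' {quant n x}))) atTop (𝓝 ∞) := by
          have h1 : Tendsto (fun n => (ν (quant n ⁻¹' {quant n x})).toReal) atTop (𝓝 0) := by
            have := (ENNReal.tendsto_toReal (a := ν {x}) (by rw [hx0]; simp)).comp htend
            rwa [hx0, ENNReal.toReal_zero] at this
          have h1' : Tendsto (fun n => (ν (quant n ⁻¹' {quant n x})).toReal) atTop (𝓝[>] 0) := by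
            rw [tendsto_nhdsWithin_iff]
            exact ⟨h1, Eventually.of_forall fun n =>
              ENNReal.toReal_pos (hcell n) (measure_lt_top ν _).ne⟩
          have h2 : Tendsto (fun n => Real.logb 2
              (ν (quant n ⁻¹' {quant n x})).toReal) atTop atBot := by
            have hlog := Real.tendsto_log_nhdsGT_zero.comp h1'
            exact Tendsto.atBot_div_const (by positivity : (0:ℝ) < Real.log 2) hlog
          have h3 : Tendsto (fun n => -Real.logb 2
              (ν (quant n ⁻¹' {quant n x})).toReal) atTop atTop :=
            tendsto_neg_atTop_iff.mpr h2
          exact ENNReal.tendsto_ofReal_atTop.comp h3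
        rw [htop.liminf_eq, hT]
        simp [hx0]
      · have hcont : ContinuousAt glogEnt (ν {x}) := by
          have h1 : ContinuousAt ENNReal.toReal (ν {x}) :=
            ENNReal.tendsto_toReal (measure_lt_top ν _).ne
          have h2 : ContinuousAt (fun t : ℝ => ENNReal.ofReal (-(Real.logb 2 t)))
              ((ν {x}).toReal) := by
            refine ENNReal.continuous_ofReal.continuousAt.comp (ContinuousAt.neg ?_)
            exact (Real.continuousAt_log
              (ENNReal.toReal_pos hx0 (measure_lt_top ν _).ne).ne').div_const _
          exact h2.comp h1
        have : Tendsto (fun n => glogEnt (ν (quant n ⁻¹' {quant n x}))) atTop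
            (𝓝 (glogEnt (ν {x}))) := hcont.tendsto.comp htend
        rw [this.liminf_eq, hT]
        simp [hx0]
    have step3 : ∫⁻ x, T x ∂ν ≤ ⨆ n, pmfEntropy (ν.map (quant n)) := by
      calc ∫⁻ x, T x ∂ν
          ≤ ∫⁻ x, liminf (fun n => glogEnt (ν (quant n ⁻¹' {quant n x}))) atTop ∂ν :=
            lintegral_mono_ae step1
        _ ≤ liminf (fun n => ∫⁻ x, glogEnt (ν (quant n ⁻¹' {quant n x})) ∂ν) atTop :=
            lintegral_liminf_le fun n => measurable_cellFn ν n
        _ = liminf (fun n => pmfEntropy (ν.map (quant n))) atTop := by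
            simp_rw [lintegral_cellFn]
        _ ≤ ⨆ n, pmfEntropy (ν.map (quant n)) := by
            rw [liminf_eq_iSup_iInf_of_nat]
            exact iSup_le fun n => le_trans (iInf₂_le n le_rfl) (le_iSup (fun m => pmfEntropy (ν.map (quant m))) n)
    refine le_trans ?_ step3
    by_cases hpa : IsPAtomic ν
    · rw [hatH_of_patomic hpa, hpa.lintegral_eq T, pmfEntropy_eq_tsum]
      refine le_of_eq (tsum_congr fun x => ?_)
      by_cases hx0 : ν {x} = 0
      · simp [hx0]
      · rw [hT]
        simp only [hx0, if_false]
        rw [← phiEnt_eq_mul]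
    · rw [hatH_of_not_patomic hpa]
      set A := {x : ι → ℝ | ν {x} ≠ 0} with hA
      have hAc : A.Countable := countable_atoms ν
      have hAnn : ν Aᶜ ≠ 0 := by
        intro h0
        refine hpa ?_
        have h1 : ∑' x : ι → ℝ, ν {x} = ∑' x : A, ν {(x : ι → ℝ)} :=
          (tsum_subtype_eq_of_support_subset fun x hx => hx).symm
        rw [IsPAtomic, h1, ← meas_countable_eq_tsum hAc,
          ← measure_add_measure_compl hAc.measurableSet, h0, add_zero]
      have hTinf : ∀ x ∈ Aᶜ, T x = ∞ := by
        intro x hx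
        rw [hT]
        simp only [not_not.mp hx, if_true]
      calc (⊤ : ℝ≥0∞) = ∞ * ν Aᶜ := (ENNReal.top_mul hAnn).symm
        _ = ∫⁻ x, Aᶜ.indicator (fun _ => ∞) x ∂ν := by
            rw [lintegral_indicator hAc.measurableSet.compl, setLIntegral_const]
        _ ≤ ∫⁻ x, T x ∂ν := by
            refine lintegral_mono fun x => ?_
            by_cases hx : x ∈ Aᶜ
            · rw [indicator_of_mem hx, hTinf x hx]
            · rw [indicator_of_notMem hx]
              exact zero_le
  · refine iSup_le fun n => ?_
    by_cases hpa : IsPAtomic ν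
    · rw [hatH_of_patomic hpa]
      exact pmfEntropy_map_le hpa (measurable_quant n)
    · rw [hatH_of_not_patomic hpa]
      exact le_top

end LemmaE


section Disintegration

lemma measurable_phiEnt : Measurable phiEnt := by
  have h : Measurable fun p : ℝ≥0∞ => -(p.toReal * Real.logb 2 p.toReal) := by
    have : (fun p : ℝ≥0∞ => -(p.toReal * Real.logb 2 p.toReal))
        = fun p : ℝ≥0∞ => -(p.toReal * (Real.log p.toReal / Real.log 2)) := by
      funext p; rw [Real.logb]
    rw [this]
    exact (ENNReal.measurable_toReal.mul
      ((Real.measurable_log.comp ENNReal.measurable_toReal).div_const _)).neg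
  exact ENNReal.measurable_ofReal.comp h

variable {α γ : Type*} {mα : MeasurableSpace α} {mγ : MeasurableSpace γ}
  {Ω : Type*} [MeasurableSpace Ω] [StandardBorelSpace Ω] [Nonempty Ω]
  (μ : Measure α) [IsFiniteMeasure μ]

lemma map_pair_eq_compProd {W : α → γ} {V : α → Ω} (hW : Measurable W) (hV : Measurable V) :
    μ.map (fun a => (W a, V a)) = (μ.map W) ⊗ₘ condDistrib V W μ := by
  exact (compProd_map_condDistrib hV.aemeasurable).symm

lemma measure_eq_of_prod {γ' β' : Type*} [MeasurableSpace γ'] [MeasurableSpace β']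
    {μ1 μ2 : Measure (γ' × β')} [IsFiniteMeasure μ1]
    (h : ∀ s t, MeasurableSet s → MeasurableSet t → μ1 (s ×ˢ t) = μ2 (s ×ˢ t)) : μ1 = μ2 := by
  refine ext_of_generate_finite _ generateFrom_prod.symm isPiSystem_prod ?_ ?_
  · rintro _ ⟨s, hs, t, ht, rfl⟩
    exact h s t hs ht
  · have := h univ univ MeasurableSet.univ MeasurableSet.univ
    simpa [univ_prod_univ] using this

lemma compProd_map_right {γ' β' β2 : Type*} [MeasurableSpace γ'] [MeasurableSpace β']
    [MeasurableSpace β2] (μ' : Measure γ') [IsFiniteMeasure μ'] (κ : Kernel γ' β')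
    [IsFiniteKernel κ] {f : β' → β2} (hf : Measurable f) :
    (μ' ⊗ₘ κ).map (Prod.map id f) = μ' ⊗ₘ (κ.map f) := by
  refine measure_eq_of_prod (fun s t hs ht => ?_)
  rw [Measure.map_apply (measurable_id.prodMap hf) (hs.prod ht)]
  have hpre : (Prod.map id f) ⁻¹' (s ×ˢ t) = s ×ˢ (f ⁻¹' t) := by
    ext p
    simp [Prod.map, Set.mem_prod]
  rw [hpre, Measure.compProd_apply_prod hs (hf ht), Measure.compProd_apply_prod hs ht]
  refine lintegral_congr fun w => ?_
  rw [Kernel.map_apply' κ hf w ht]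

lemma condDistrib_map_ae {Ω₂ : Type*} [MeasurableSpace Ω₂] [StandardBorelSpace Ω₂] [Nonempty Ω₂]
    {W : α → γ} {V : α → Ω} (hW : Measurable W) (hV : Measurable V)
    {f : Ω → Ω₂} (hf : Measurable f) :
    ∀ᵐ w ∂(μ.map W), condDistrib (fun a => f (V a)) W μ w = (condDistrib V W μ w).map f := by
  have h1 : μ.map (fun a => (W a, f (V a))) = (μ.map (fun a => (W a, V a))).map (Prod.map id f) := by
    rw [Measure.map_map (measurable_id.prodMap hf) (hW.prodMk hV)]
    rfl
  have hcp : μ.map (fun a => (W a, f (V a))) = (μ.map W) ⊗ₘ ((condDistrib V W μ).map f) := by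
    rw [h1, map_pair_eq_compProd μ hW hV, compProd_map_right _ _ hf]
  have h0 := condDistrib_ae_eq_of_measure_eq_compProd (μ := μ) W (hf.comp hV).aemeasurable
    hcp
  filter_upwards [h0] with w hw
  exact hw.trans (Kernel.map_apply _ hf w)

theorem infoLoss_eq_lintegral_hatH {α' γ' ι : Type*} [MeasurableSpace α'] [Fintype ι]
    [MeasurableSpace γ'] (μ : Measure α') [IsFiniteMeasure μ] {X : α' → ι → ℝ} {W : α' → γ'}
    (hX : Measurable X) (hW : Measurable W) :
    infoLoss μ X W = ∫⁻ w, hatH (condDistrib X W μ w) ∂(μ.map W) := by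
  set ρ := condDistrib X W μ with hρ
  have hae : ∀ᵐ w ∂(μ.map W), ∀ n : ℕ,
      condDistrib (fun a => quant n (X a)) W μ w = (ρ w).map (quant n) := by
    rw [ae_all_iff]
    intro n
    exact condDistrib_map_ae μ hW hX (measurable_quant n)
  have hcond : ∀ n, condEntQ μ X W n = ∫⁻ w, pmfEntropy ((ρ w).map (quant n)) ∂(μ.map W) := by
    intro n
    rw [condEntQ, condEnt]
    refine lintegral_congr_ae ?_
    filter_upwards [hae] with w hw
    rw [hw n]
  have hmeas : ∀ n, Measurable fun w => pmfEntropy ((ρ w).map (quant n)) := by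
    intro n
    have heq : (fun w => pmfEntropy ((ρ w).map (quant n)))
        = fun w => ∑' c : range (quant (ι := ι) n), phiEnt (ρ w (quant n ⁻¹' {(c : ι → ℝ)})) := by
      funext w
      exact pmfEntropy_map_eq (measurable_quant n) (range_quant_countable n) (ρ w)
    rw [heq]
    haveI := (range_quant_countable (ι := ι) n).to_subtype
    refine Measurable.ennreal_tsum fun c => ?_
    exact measurable_phiEnt.comp
      (Kernel.measurable_coe ρ (measurable_quant n (measurableSet_singleton _)))
  rw [infoLoss]
  calc ⨆ n, condEntQ μ X W n
      = ⨆ n, ∫⁻ w, pmfEntropy ((ρ w).map (quant n)) ∂(μ.map W) := by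
        exact iSup_congr hcond
    _ = ∫⁻ w, ⨆ n, pmfEntropy ((ρ w).map (quant n)) ∂(μ.map W) :=
        (lintegral_iSup' (fun n => (hmeas n).aemeasurable)
          (Eventually.of_forall fun w => monotone_nat_of_le_succ fun n =>
            pmfEntropy_quant_mono (ρ w) n)).symm
    _ = ∫⁻ w, hatH (ρ w) ∂(μ.map W) :=
        lintegral_congr fun w => (hatH_eq_iSup_pmfEntropy_quant (ρ w)).symm

end Disintegration


section Star
variable {E F : Type*} [MeasurableSpace E] [MeasurableSingletonClass E]
  [MeasurableSpace F] [MeasurableSingletonClass F]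

lemma off_fiber_zero {π : Kernel F E} [IsMarkovKernel π] {g : E → F} {y : F}
    (hg : Measurable g) (hy : π y (g ⁻¹' {y}) = 1) {x : E} (hx : g x ≠ y) :
    π y {x} = 0 := by
  have hc0 : π y ((g ⁻¹' {y})ᶜ) = 0 := by
    rw [measure_compl (hg (measurableSet_singleton y)) (measure_ne_top _ _), hy,
      measure_univ, tsub_self]
  refine le_antisymm (le_trans (measure_mono ?_) hc0.le) (zero_le)
  intro z hz
  rw [mem_singleton_iff] at hz
  subst hz
  exact fun hm => hx hm

lemma bind_singleton_eq {σ : Measure F} [IsProbabilityMeasure σ] {π : Kernel F E}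
    [IsMarkovKernel π] {g : E → F} (hg : Measurable g)
    (hfib : ∀ᵐ y ∂σ, π y (g ⁻¹' {y}) = 1) (x : E) :
    (σ.bind π) {x} = σ {g x} * π (g x) {x} := by
  rw [Measure.bind_apply (measurableSet_singleton x) (Kernel.measurable π).aemeasurable]
  have hae : (fun y => π y {x}) =ᵐ[σ]
      fun y => ({g x} : Set F).indicator (fun _ => π (g x) {x}) y := by
    filter_upwards [hfib] with y hyfib
    by_cases hxy : y = g x
    · subst hxy
      rw [indicator_of_mem (mem_singleton _)]
    · rw [indicator_of_notMem
        (show y ∉ ({g x} : Set F) from fun hm => hxy (mem_singleton_iff.mp hm))]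
      exact off_fiber_zero hg hyfib (fun hgxy => hxy hgxy.symm)
  rw [lintegral_congr_ae hae, lintegral_indicator (measurableSet_singleton _),
    setLIntegral_const, mul_comm]

lemma fiber_tsum_eq {π : Kernel F E} {g : E → F} {y : F} (hg : Measurable g)
    (hy : π y (g ⁻¹' {y}) = 1) [IsMarkovKernel π] :
    (∑' x : (g ⁻¹' {y} : Set E), π y {(x : E)}) = ∑' x : E, π y {x} := by
  refine tsum_subtype_eq_of_support_subset (f := fun x : E => π y {x}) (s := g ⁻¹' {y})
    fun x hx => ?_
  rw [Function.mem_support] at hx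
  by_contra hxm
  exact hx (off_fiber_zero hg hy (fun h => hxm h))

lemma fiber_phi_tsum_eq {π : Kernel F E} {g : E → F} {y : F} (hg : Measurable g)
    (hy : π y (g ⁻¹' {y}) = 1) [IsMarkovKernel π] :
    (∑' x : (g ⁻¹' {y} : Set E), phiEnt (π y {(x : E)})) = pmfEntropy (π y) := by
  rw [pmfEntropy_eq_tsum]
  refine tsum_subtype_eq_of_support_subset (f := fun x : E => phiEnt (π y {x}))
    (s := g ⁻¹' {y}) fun x hx => ?_
  rw [Function.mem_support] at hx
  by_contra hxm
  rw [off_fiber_zero hg hy (fun h => hxm h), phiEnt_zero] at hx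
  exact hx rfl

lemma bind_tsum_singleton {σ : Measure F} [IsProbabilityMeasure σ] {π : Kernel F E}
    [IsMarkovKernel π] {g : E → F} (hg : Measurable g)
    (hfib : ∀ᵐ y ∂σ, π y (g ⁻¹' {y}) = 1) :
    ∑' x : E, (σ.bind π) {x} = ∑' y : F, σ {y} * (∑' x : E, π y {x}) := by
  have hatom : ∀ y : F, σ {y} ≠ 0 → π y (g ⁻¹' {y}) = 1 := by
    intro y hy
    by_contra hc
    have : σ {y} ≤ σ {y' | ¬ (π y' (g ⁻¹' {y'}) = 1)} :=
      measure_mono (singleton_subset_iff.mpr hc)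
    rw [ae_iff.mp hfib] at this
    exact hy (le_antisymm this (zero_le))
  calc ∑' x : E, (σ.bind π) {x}
      = ∑' y : F, ∑' x : (g ⁻¹' {y} : Set E), (σ.bind π) {(x : E)} :=
        (ENNReal.tsum_fiberwise _ g).symm
    _ = ∑' y : F, σ {y} * (∑' x : E, π y {x}) := by
        refine tsum_congr fun y => ?_
        by_cases hy : σ {y} = 0
        · rw [hy, zero_mul]
          have h1 : ∀ x : (g ⁻¹' {y} : Set E), (σ.bind π) {(x : E)} = 0 := by
            intro x
            rw [bind_singleton_eq hg hfib, show g (x : E) = y from x.2, hy, zero_mul]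
          rw [tsum_congr h1, tsum_zero]
        · have h1 : ∀ x : (g ⁻¹' {y} : Set E), (σ.bind π) {(x : E)} = σ {y} * π y {(x : E)} := by
            intro x
            rw [bind_singleton_eq hg hfib]
            have : g (x : E) = y := x.2
            rw [this]
          rw [tsum_congr h1, ENNReal.tsum_mul_left, fiber_tsum_eq hg (hatom y hy)]

lemma star2 (σ : Measure F) [IsProbabilityMeasure σ] (π : Kernel F E) [IsMarkovKernel π]
    {g : E → F} (hg : Measurable g)
    (hfib : ∀ᵐ y ∂σ, π y (g ⁻¹' {y}) = 1) :
    hatH (σ.bind π) = (∫⁻ y, hatH (π y) ∂σ) + hatH σ := by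
  have hatom : ∀ y : F, σ {y} ≠ 0 → π y (g ⁻¹' {y}) = 1 := by
    intro y hy
    by_contra hc
    have hle : σ {y} ≤ σ {y' | ¬ (π y' (g ⁻¹' {y'}) = 1)} :=
      measure_mono (singleton_subset_iff.mpr hc)
    rw [ae_iff.mp hfib] at hle
    exact hy (le_antisymm hle (zero_le))
  have hbind_univ : (σ.bind π) univ = 1 := by
    rw [Measure.bind_apply MeasurableSet.univ (Kernel.measurable π).aemeasurable]
    simp
  have hat_le_one : ∀ y : F, (∑' x : E, π y {x}) ≤ 1 := by
    intro y
    have := tsum_meas_singleton_le' (π y)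
    rwa [measure_univ] at this
  have hσ_le_one : (∑' y : F, σ {y}) ≤ 1 := by
    have := tsum_meas_singleton_le' σ
    rwa [measure_univ] at this
  have hc := bind_tsum_singleton hg hfib
  by_cases hσa : IsPAtomic σ
  · have hσ1 : (∑' y : F, σ {y}) = 1 := by rw [hσa]; exact measure_univ
    by_cases hπa : ∀ y : F, σ {y} ≠ 0 → IsPAtomic (π y)
    · -- the chain rule case
      have hat1 : ∀ y : F, σ {y} ≠ 0 → (∑' x : E, π y {x}) = 1 := by
        intro y hy
        rw [hπa y hy]
        exact measure_univ
      have hbind_at : IsPAtomic (σ.bind π) := by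
        rw [IsPAtomic, hbind_univ, hc]
        have hterm : ∀ y : F, σ {y} * (∑' x : E, π y {x}) = σ {y} := by
          intro y
          by_cases hy : σ {y} = 0
          · rw [hy, zero_mul]
          · rw [hat1 y hy, mul_one]
        rw [tsum_congr hterm, hσ1]
      rw [hatH_of_patomic hbind_at, hatH_of_patomic hσa, hσa.lintegral_eq fun y => hatH (π y),
        pmfEntropy_eq_tsum]
      calc ∑' x : E, phiEnt ((σ.bind π) {x})
          = ∑' y : F, ∑' x : (g ⁻¹' {y} : Set E), phiEnt ((σ.bind π) {(x : E)}) :=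
            (ENNReal.tsum_fiberwise _ g).symm
        _ = ∑' y : F, (phiEnt (σ {y}) + σ {y} * hatH (π y)) := by
            refine tsum_congr fun y => ?_
            by_cases hy : σ {y} = 0
            · have h1 : ∀ x : (g ⁻¹' {y} : Set E), phiEnt ((σ.bind π) {(x : E)}) = 0 := by
                intro x
                rw [bind_singleton_eq hg hfib, show g (x : E) = y from x.2, hy, zero_mul,
                  phiEnt_zero]
              rw [tsum_congr h1, tsum_zero, hy, phiEnt_zero, zero_mul, add_zero]
            · have h1 : ∀ x : (g ⁻¹' {y} : Set E), phiEnt ((σ.bind π) {(x : E)})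
                  = π y {(x : E)} * phiEnt (σ {y}) + σ {y} * phiEnt (π y {(x : E)}) := by
                intro x
                rw [bind_singleton_eq hg hfib, show g (x : E) = y from x.2]
                exact phiEnt_mul prob_le_one prob_le_one
              rw [tsum_congr h1, ENNReal.tsum_add, ENNReal.tsum_mul_right, ENNReal.tsum_mul_left,
                fiber_tsum_eq hg (hatom y hy), hat1 y hy, one_mul,
                fiber_phi_tsum_eq hg (hatom y hy), hatH_of_patomic (hπa y hy)]
        _ = (∑' y : F, phiEnt (σ {y})) + ∑' y : F, σ {y} * hatH (π y) := ENNReal.tsum_add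
        _ = (∑' y : F, σ {y} * hatH (π y)) + ∑' y : F, phiEnt (σ {y}) := add_comm _ _
    · -- some atom has a non-atomic conditional : both sides are ∞
      push_neg at hπa
      obtain ⟨y₀, hy₀, hπy₀⟩ := hπa
      have hR : (∫⁻ y, hatH (π y) ∂σ) = ∞ := by
        rw [hσa.lintegral_eq fun y => hatH (π y)]
        refine top_le_iff.mp ?_
        calc (⊤ : ℝ≥0∞) = σ {y₀} * hatH (π y₀) := by
              rw [hatH_of_not_patomic hπy₀, ENNReal.mul_top hy₀]
          _ ≤ _ := ENNReal.le_tsum y₀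
      have hL : ¬ IsPAtomic (σ.bind π) := by
        intro hpa
        rw [IsPAtomic, hbind_univ, hc] at hpa
        have hterm : ∀ y : F, σ {y} * (∑' x : E, π y {x})
            + σ {y} * (1 - ∑' x : E, π y {x}) = σ {y} := by
          intro y
          rw [← mul_add, add_tsub_cancel_of_le (hat_le_one y), mul_one]
        have hsum : (∑' y : F, σ {y} * (∑' x : E, π y {x}))
            + ∑' y : F, σ {y} * (1 - ∑' x : E, π y {x}) = 1 := by
          rw [← ENNReal.tsum_add, tsum_congr hterm, hσ1]
        rw [hpa] at hsum
        have hz : (∑' y : F, σ {y} * (1 - ∑' x : E, π y {x})) = 0 :=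
          (ENNReal.add_right_inj (by norm_num : (1:ℝ≥0∞) ≠ ∞)).mp
            (by rw [add_zero]; exact hsum)
        have hy0z : σ {y₀} * (1 - ∑' x : E, π y₀ {x}) = 0 :=
          le_antisymm (hz ▸ ENNReal.le_tsum y₀) (zero_le)
        rcases mul_eq_zero.mp hy0z with h | h
        · exact hy₀ h
        · have h1 : (1:ℝ≥0∞) ≤ ∑' x : E, π y₀ {x} := tsub_eq_zero_iff_le.mp h
          refine hπy₀ ?_
          rw [IsPAtomic, measure_univ]
          exact le_antisymm (hat_le_one y₀) h1
      rw [hatH_of_not_patomic hL, hR]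
      simp
  · -- σ not purely atomic : both sides are ∞
    have hσ1 : (∑' y : F, σ {y}) ≠ 1 := by
      intro hc1
      exact hσa (by rw [IsPAtomic, measure_univ, hc1])
    have hσlt : (∑' y : F, σ {y}) < 1 := lt_of_le_of_ne hσ_le_one hσ1
    have hL : ¬ IsPAtomic (σ.bind π) := by
      intro hpa
      rw [IsPAtomic, hbind_univ, hc] at hpa
      have hle2 : (∑' y : F, σ {y} * (∑' x : E, π y {x})) ≤ ∑' y : F, σ {y} :=
        Summable.tsum_le_tsum (fun y => by
          calc σ {y} * (∑' x : E, π y {x}) ≤ σ {y} * 1 := mul_le_mul_right (hat_le_one y) _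
            _ = σ {y} := mul_one _) ENNReal.summable ENNReal.summable
      rw [hpa] at hle2
      exact absurd (hle2.trans_lt hσlt) (lt_irrefl _)
    rw [hatH_of_not_patomic hL, hatH_of_not_patomic hσa]
    simp

end Star


section Assembly

lemma measurable_hatH_kernel {γ' ι : Type*} [MeasurableSpace γ'] [Fintype ι]
    (ρ : Kernel γ' (ι → ℝ)) [IsMarkovKernel ρ] :
    Measurable fun w => hatH (ρ w) := by
  have heq : (fun w => hatH (ρ w)) = fun w => ⨆ n, pmfEntropy ((ρ w).map (quant n)) :=
    funext fun w => hatH_eq_iSup_pmfEntropy_quant (ρ w)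
  rw [heq]
  refine Measurable.iSup fun n => ?_
  have heq2 : (fun w => pmfEntropy ((ρ w).map (quant n)))
      = fun w => ∑' c : range (quant (ι := ι) n), phiEnt (ρ w (quant n ⁻¹' {(c : ι → ℝ)})) :=
    funext fun w => pmfEntropy_map_eq (measurable_quant n) (range_quant_countable n) (ρ w)
  rw [heq2]
  haveI := (range_quant_countable (ι := ι) n).to_subtype
  exact Measurable.ennreal_tsum fun c => measurable_phiEnt.comp
    (Kernel.measurable_coe ρ (measurable_quant n (measurableSet_singleton _)))

end Assembly

/-- **Information loss of a cascade.**  For a random variable `X` on a standard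
probability space and measurable functions `g`, `h`, with `Y = g(X)` and `Z = h(Y)`,
the information loss is additive:
`L(X→Z) = L(X→Y) + L(Y→Z)`, i.e. `H(X|Z) = H(X|Y) + H(Y|Z)`. -/
theorem infoLoss_cascade
    {α ι κ lt : Type*} [MeasurableSpace α] [StandardBorelSpace α] [Nonempty α]
    [Fintype ι] [Fintype κ] [Fintype lt]
    (μ : Measure α) [IsProbabilityMeasure μ]
    (X : α → ι → ℝ) (g : (ι → ℝ) → κ → ℝ) (h : (κ → ℝ) → lt → ℝ)
    (hX : Measurable X) (hg : Measurable g) (hh : Measurable h) :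
    infoLoss μ X (fun a => h (g (X a))) =
      infoLoss μ X (fun a => g (X a)) +
        infoLoss μ (fun a => g (X a)) (fun a => h (g (X a))) := by
  have hY : Measurable fun a => g (X a) := hg.comp hX
  have hZ : Measurable fun a => h (g (X a)) := hh.comp hY
  set π := condDistrib X (fun a => g (X a)) μ with hπdef
  set τ := condDistrib (fun a => g (X a)) (fun a => h (g (X a))) μ with hτdef
  set ρ := condDistrib X (fun a => h (g (X a))) μ with hρdef
  haveI : IsProbabilityMeasure (μ.map fun a => g (X a)) :=
    Measure.isProbabilityMeasure_map hY.aemeasurable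
  haveI : IsProbabilityMeasure (μ.map fun a => h (g (X a))) :=
    Measure.isProbabilityMeasure_map hZ.aemeasurable
  -- tower property
  have hcp : μ.map (fun a => (h (g (X a)), X a))
      = (μ.map fun a => h (g (X a))) ⊗ₘ (π ∘ₖ τ) := by
    refine (measure_eq_of_prod fun s t hs ht => ?_)
    have hl : (μ.map (fun a => (h (g (X a)), X a))) (s ×ˢ t)
        = μ ((fun a => h (g (X a))) ⁻¹' s ∩ X ⁻¹' t) := by
      rw [Measure.map_apply (hZ.prodMk hX) (hs.prod ht), mk_preimage_prod]
    have hcomm : ∀ z, (π ∘ₖ τ) z t = ∫⁻ y, π y t ∂(τ z) := fun z => by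
      rw [Kernel.comp_apply, Measure.bind_apply ht (Kernel.measurable π).aemeasurable]
    have hr1 : ((μ.map fun a => h (g (X a))) ⊗ₘ (π ∘ₖ τ)) (s ×ˢ t)
        = ∫⁻ z in s, ∫⁻ y, π y t ∂(τ z) ∂(μ.map fun a => h (g (X a))) := by
      rw [Measure.compProd_apply_prod hs ht]
      exact setLIntegral_congr_fun hs (fun z _ => hcomm z)
    have hr2 : ∫⁻ z in s, ∫⁻ y, π y t ∂(τ z) ∂(μ.map fun a => h (g (X a)))
        = ∫⁻ p in s ×ˢ (univ : Set (κ → ℝ)), π p.2 t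
            ∂((μ.map fun a => h (g (X a))) ⊗ₘ τ) := by
      have hsl := Measure.setLIntegral_compProd (μ := μ.map fun a => h (g (X a))) (κ := τ)
        (f := fun p => π p.2 t) ((Kernel.measurable_coe π ht).comp measurable_snd) hs
        MeasurableSet.univ
      simp_rw [Measure.restrict_univ] at hsl
      exact hsl.symm
    have hr3 : (μ.map fun a => h (g (X a))) ⊗ₘ τ
        = μ.map (fun a => (h (g (X a)), g (X a))) := (map_pair_eq_compProd μ hZ hY).symm
    have hr4 : ∫⁻ p in s ×ˢ (univ : Set (κ → ℝ)), π p.2 t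
          ∂(μ.map (fun a => (h (g (X a)), g (X a))))
        = ∫⁻ a in (fun a => (h (g (X a)), g (X a))) ⁻¹' (s ×ˢ (univ : Set (κ → ℝ))),
            π (g (X a)) t ∂μ :=
      setLIntegral_map (hs.prod MeasurableSet.univ)
        ((Kernel.measurable_coe π ht).comp measurable_snd) (hZ.prodMk hY)
    have hpre : (fun a => (h (g (X a)), g (X a))) ⁻¹' (s ×ˢ (univ : Set (κ → ℝ)))
        = (fun a => h (g (X a))) ⁻¹' s := by
      ext a
      simp [Set.mem_prod]
    have hl2 : μ ((fun a => h (g (X a))) ⁻¹' s ∩ X ⁻¹' t)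
        = ∫⁻ y in h ⁻¹' s, π y t ∂(μ.map fun a => g (X a)) := by
      have hY1 := congrArg (fun m : Measure ((κ → ℝ) × (ι → ℝ)) => m ((h ⁻¹' s) ×ˢ t))
        (map_pair_eq_compProd μ hY hX)
      rw [Measure.map_apply (hY.prodMk hX) ((hh hs).prod ht),
        Measure.compProd_apply_prod (hh hs) ht] at hY1
      have hpre2 : (fun a => (g (X a), X a)) ⁻¹' ((h ⁻¹' s) ×ˢ t)
          = (fun a => h (g (X a))) ⁻¹' s ∩ X ⁻¹' t := by
        ext a
        simp [Set.mem_prod]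
      rw [hpre2] at hY1
      exact hY1
    have hl3 : ∫⁻ y in h ⁻¹' s, π y t ∂(μ.map fun a => g (X a))
        = ∫⁻ a in (fun a => g (X a)) ⁻¹' (h ⁻¹' s), π (g (X a)) t ∂μ :=
      setLIntegral_map (hh hs) (Kernel.measurable_coe π ht) hY
    rw [hl, hr1, hr2, hr3, hr4, hpre, hl2, hl3]
    rfl
  have htower : ∀ᵐ z ∂(μ.map fun a => h (g (X a))), ρ z = (τ z).bind π := by
    have h0 := condDistrib_ae_eq_of_measure_eq_compProd (μ := μ) (fun a => h (g (X a))) hX.aemeasurable hcp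
    filter_upwards [h0] with z hz
    exact hz.trans (Kernel.comp_apply _ _ _)
  -- fiber property of `π`
  set s0 : Set ((κ → ℝ) × (ι → ℝ)) := {p | g p.2 = p.1} with hs0def
  have hs0 : MeasurableSet s0 := measurableSet_eq_fun (hg.comp measurable_snd) measurable_fst
  have hmk : ∀ y : κ → ℝ, Prod.mk y ⁻¹' s0 = g ⁻¹' {y} := by
    intro y
    ext x
    simp [hs0def]
  have hfm : Measurable fun y : κ → ℝ => π y (g ⁻¹' {y}) := by
    have := Kernel.measurable_kernel_prodMk_left (κ := π) hs0
    simpa [hmk] using this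
  have hfib : ∀ᵐ y ∂(μ.map fun a => g (X a)), π y (g ⁻¹' {y}) = 1 := by
    have h1 : ((μ.map fun a => g (X a)) ⊗ₘ π) s0 = 1 := by
      rw [← map_pair_eq_compProd μ hY hX, Measure.map_apply (hY.prodMk hX) hs0]
      have huniv : (fun a => (g (X a), X a)) ⁻¹' s0 = univ := by
        ext a
        simp [hs0def]
      rw [huniv, measure_univ]
    have h2 : ((μ.map fun a => g (X a)) ⊗ₘ π) s0
        = ∫⁻ y, π y (g ⁻¹' {y}) ∂(μ.map fun a => g (X a)) := by
      rw [Measure.compProd_apply hs0]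
      exact lintegral_congr fun y => by rw [hmk]
    have hint1 : ∫⁻ y, π y (g ⁻¹' {y}) ∂(μ.map fun a => g (X a)) = 1 := by
      rw [← h2, h1]
    have hone : ∫⁻ _ : κ → ℝ, (1:ℝ≥0∞) ∂(μ.map fun a => g (X a)) = 1 := by
      rw [lintegral_one, measure_univ]
    have hae := ae_eq_of_ae_le_of_lintegral_le (μ := μ.map fun a => g (X a))
      (f := fun y => π y (g ⁻¹' {y})) (g := fun _ => 1)
      (Eventually.of_forall fun y => prob_le_one)
      (by rw [hint1]; exact ENNReal.one_ne_top)
      measurable_const.aemeasurable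
      (by rw [hone, hint1])
    filter_upwards [hae] with y hy
    exact hy
  -- transfer the fiber property along `τ`
  set N : Set (κ → ℝ) := {y | ¬ π y (g ⁻¹' {y}) = 1} with hNdef
  have hNm : MeasurableSet N := (hfm (measurableSet_singleton 1)).compl
  have hμYN : (μ.map fun a => g (X a)) N = 0 := ae_iff.mp hfib
  have hτN : ∀ᵐ z ∂(μ.map fun a => h (g (X a))), τ z N = 0 := by
    have hint : ∫⁻ z, τ z N ∂(μ.map fun a => h (g (X a)))
        = (μ.map fun a => g (X a)) N := by
      have hcg := congrArg (fun m : Measure ((lt → ℝ) × (κ → ℝ)) =>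
        m ((univ : Set (lt → ℝ)) ×ˢ N)) (map_pair_eq_compProd μ hZ hY)
      rw [Measure.map_apply (hZ.prodMk hY) (MeasurableSet.univ.prod hNm),
        Measure.compProd_apply_prod MeasurableSet.univ hNm, Measure.restrict_univ] at hcg
      have hpre : (fun a => (h (g (X a)), g (X a))) ⁻¹' ((univ : Set (lt → ℝ)) ×ˢ N)
          = (fun a => g (X a)) ⁻¹' N := by
        ext a
        simp [Set.mem_prod]
      rw [hpre] at hcg
      rw [← hcg, Measure.map_apply hY hNm]
    have h0 : (fun z => τ z N) =ᵐ[μ.map fun a => h (g (X a))] 0 :=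
      (lintegral_eq_zero_iff (Kernel.measurable_coe τ hNm)).mp (by rw [hint, hμYN])
    filter_upwards [h0] with z hz
    exact hz
  -- put everything together
  rw [infoLoss_eq_lintegral_hatH μ hX hZ, infoLoss_eq_lintegral_hatH μ hX hY,
    infoLoss_eq_lintegral_hatH μ hY hZ]
  have key : ∀ᵐ z ∂(μ.map fun a => h (g (X a))),
      hatH (ρ z) = (∫⁻ y, hatH (π y) ∂(τ z)) + hatH (τ z) := by
    filter_upwards [htower, hτN] with z hz hzN
    rw [hz]
    exact star2 (τ z) π hg (ae_iff.mpr hzN)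
  rw [lintegral_congr_ae key, lintegral_add_right _ (measurable_hatH_kernel τ)]
  congr 1
  have hm : Measurable fun y => hatH (π y) := measurable_hatH_kernel π
  calc ∫⁻ z, ∫⁻ y, hatH (π y) ∂(τ z) ∂(μ.map fun a => h (g (X a)))
      = ∫⁻ p, hatH (π p.2) ∂((μ.map fun a => h (g (X a))) ⊗ₘ τ) :=
        (Measure.lintegral_compProd (hm.comp measurable_snd)).symm
    _ = ∫⁻ p, hatH (π p.2) ∂(μ.map fun a => (h (g (X a)), g (X a))) := by
        rw [map_pair_eq_compProd μ hZ hY]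
    _ = ∫⁻ a, hatH (π (g (X a))) ∂μ := lintegral_map (hm.comp measurable_snd) (hZ.prodMk hY)
    _ = ∫⁻ y, hatH (π y) ∂(μ.map fun a => g (X a)) := (lintegral_map hm hY).symm

end
end

section
/- Let g: 𝒳 → 𝒴 be a piecewise bijective function with partition {𝒳_i}, let X have distribution P_X ≪ μ^N supported on 𝒳, Y = g(X). Then the information loss satisfies the ordered chain of bounds L(X→Y) ≤ ∫_𝒴 f_Y(y) log card(g^{-1}[{y}]) dy ≤ log( Σ_i ∫_{𝒴_i} f_Y(y) dy ) ≤ ess sup_{y∈𝒴} log card(g^{-1}[{y}]) ≤ log card({𝒳_i}), where card denotes cardinality and 𝒴_i = g(𝒳_i). -/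
open MeasureTheory ProbabilityTheory Filter Set
open scoped ENNReal NNReal Topology

noncomputable section

/-- A **piecewise bijective function** (PBF) `g : 𝒳 → 𝒴`, `𝒳, 𝒴 ⊆ ℝᴺ`, w.r.t. an
input distribution `ν`: there is a (countable) partition `{𝒳ᵢ}` of `𝒳 = s` into
measurable sets of positive `ν`-measure on each of which `g` is injective (hence a
bijection onto its image), the Jacobian `J` of `g` exists on the pieces, and
`det J ≠ 0` `ν`-a.s.  (Surjectivity onto `𝒴 = g(𝒳)` is automatic.) -/
structure IsPBF {ι I : Type*} [Fintype ι] [Countable I]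
    (g : (ι → ℝ) → ι → ℝ) (s : Set (ι → ℝ)) (pieces : I → Set (ι → ℝ))
    (J : (ι → ℝ) → (ι → ℝ) →L[ℝ] (ι → ℝ)) (ν : Measure (ι → ℝ)) : Prop where
  meas : Measurable g
  measSet : ∀ i, MeasurableSet (pieces i)
  disj : Pairwise (Function.onFun Disjoint pieces)
  cover : (⋃ i, pieces i) = s
  pos : ∀ i, 0 < ν (pieces i)
  injOn : ∀ i, Set.InjOn g (pieces i)
  deriv : ∀ i, ∀ x ∈ pieces i, HasFDerivWithinAt g (J x) (pieces i) x
  det_ne : ∀ᵐ x ∂ν, (J x).det ≠ 0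

/-- Differential entropy (base 2) of a distribution `ν ≪ volume` on `ℝᴺ`:
`h(ν) = −∫ log₂ (dν/dλ) dν = −∫ f log₂ f dλ`. -/
def diffEnt {ι : Type*} [Fintype ι] (ν : Measure (ι → ℝ)) : ℝ :=
  - ∫ x, Real.logb 2 ((ν.rnDeriv volume x).toReal) ∂ν

/-- Extended base-2 logarithm on `ℝ≥0∞` (with `log₂ ⊤ = ⊤`). -/
def elog2 (x : ℝ≥0∞) : ℝ≥0∞ :=
  if x = ⊤ then ⊤ else ENNReal.ofReal (Real.logb 2 x.toReal)

section AuxLemmas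

lemma elog2_mono : Monotone elog2 := by
  intro x y h
  unfold elog2
  rcases eq_or_ne y ⊤ with rfl | hy
  · simp
  have hx : x ≠ ⊤ := fun hx' => hy (top_unique (hx' ▸ h))
  rw [if_neg hx, if_neg hy]
  rcases eq_or_ne x 0 with rfl | hx0
  · simp only [ENNReal.toReal_zero, Real.logb_zero, ENNReal.ofReal_zero]
    exact zero_le
  exact ENNReal.ofReal_le_ofReal
    (Real.logb_le_logb_of_le one_lt_two (ENNReal.toReal_pos hx0 hx) (ENNReal.toReal_mono hy h))

lemma sum_neg_mul_log_le {β : Type*} (T : Finset β) (p : β → ℝ)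
    (h0 : ∀ b ∈ T, 0 ≤ p b) (h1 : ∑ b ∈ T, p b = 1) :
    ∑ b ∈ T, -(p b * Real.log (p b)) ≤ Real.log T.card := by
  have hTne : T.Nonempty := by
    rcases T.eq_empty_or_nonempty with rfl | h
    · simp at h1
    · exact h
  have hn : (1 : ℝ) ≤ T.card := by exact_mod_cast hTne.card_pos
  have hn0 : (0 : ℝ) < T.card := by linarith
  have key : ∀ b ∈ T, -(p b * Real.log (p b)) ≤
      1 / T.card - p b + p b * Real.log T.card := by
    intro b hb
    rcases eq_or_lt_of_le (h0 b hb) with h | h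
    · rw [← h]
      simp only [neg_zero, zero_mul, mul_zero, sub_zero, add_zero, zero_add, zero_mul]
      positivity
    · have hlog : Real.log (((T.card : ℝ) * p b)⁻¹) ≤ ((T.card : ℝ) * p b)⁻¹ - 1 :=
        Real.log_le_sub_one_of_pos (by positivity)
      rw [Real.log_inv, Real.log_mul (ne_of_gt hn0) (ne_of_gt h)] at hlog
      have e1 : -(p b * Real.log (p b)) =
          p b * (-(Real.log (T.card : ℝ) + Real.log (p b))) + p b * Real.log (T.card : ℝ) := by
        ring
      rw [e1]
      have h2 : p b * (-(Real.log (T.card : ℝ) + Real.log (p b))) ≤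
          p b * (((T.card : ℝ) * p b)⁻¹ - 1) := mul_le_mul_of_nonneg_left hlog h.le
      have h3 : p b * (((T.card : ℝ) * p b)⁻¹) = 1 / T.card := by
        rw [mul_inv, mul_comm ((T.card : ℝ))⁻¹, ← mul_assoc,
          mul_inv_cancel₀ (ne_of_gt h), one_mul, one_div]
      have h4 : p b * (((T.card : ℝ) * p b)⁻¹ - 1) = p b * (((T.card : ℝ) * p b)⁻¹) - p b := by
        ring
      linarith
  calc ∑ b ∈ T, -(p b * Real.log (p b))
      ≤ ∑ b ∈ T, (1 / T.card - p b + p b * Real.log T.card) := Finset.sum_le_sum key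
    _ = Real.log T.card := by
        rw [Finset.sum_add_distrib, Finset.sum_sub_distrib, ← Finset.sum_mul, h1, one_mul,
          Finset.sum_const, nsmul_eq_mul, mul_one_div, div_self (ne_of_gt hn0)]
        ring

lemma pmfEntropy_le_elog2_encard {β : Type*} [MeasurableSpace β] [MeasurableSingletonClass β]
    (ν : Measure β) [IsProbabilityMeasure ν] (S : Set β) (hS : ν Sᶜ = 0) :
    pmfEntropy ν ≤ elog2 (S.encard : ℝ≥0∞) := by
  classical
  rcases eq_or_ne S.encard ⊤ with htop | hfin
  · rw [htop, ENat.toENNReal_top, elog2, if_pos rfl]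
    exact le_top
  have hSfin : S.Finite := Set.encard_ne_top_iff.mp hfin
  set T := hSfin.toFinset with hT
  set p : β → ℝ := fun b => (ν {b}).toReal with hp
  have hzero : ∀ b ∉ T, ENNReal.ofReal (-(p b * Real.logb 2 (p b))) = 0 := by
    intro b hb
    have hb' : b ∉ S := fun h => hb (hSfin.mem_toFinset.mpr h)
    have : ν {b} = 0 := measure_mono_null (Set.singleton_subset_iff.mpr hb') hS
    simp [hp, this]
  have hSmeas : MeasurableSet S := hSfin.measurableSet
  have hνS : ν S = 1 := by
    have h := measure_add_measure_compl (μ := ν) hSmeas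
    rw [hS, add_zero, measure_univ] at h
    exact h
  have hSeq : (⋃ b ∈ T, {b} : Set β) = S := by
    ext x
    simp [hT, hSfin.mem_toFinset]
  have hsum_meas : ∑ b ∈ T, ν {b} = 1 := by
    rw [← hνS, ← hSeq, measure_biUnion_finset ?_ fun b _ => measurableSet_singleton b]
    intro b _ c _ hbc
    exact Set.disjoint_singleton.mpr hbc
  have hsum : ∑ b ∈ T, p b = 1 := by
    rw [hp, ← ENNReal.toReal_sum (fun b _ => measure_ne_top ν _), hsum_meas, ENNReal.toReal_one]
  have h0p : ∀ b ∈ T, 0 ≤ p b := fun b _ => ENNReal.toReal_nonneg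
  have hp1 : ∀ b, p b ≤ 1 := by
    intro b
    rw [hp]
    simpa using ENNReal.toReal_mono ENNReal.one_ne_top prob_le_one
  have hterm : ∀ b ∈ T, 0 ≤ -(p b * Real.logb 2 (p b)) := by
    intro b hb
    rcases eq_or_lt_of_le (h0p b hb) with h | h
    · simp [← h]
    · have hlb : Real.logb 2 (p b) ≤ 0 :=
        Real.logb_nonpos one_lt_two (h0p b hb) (hp1 b)
      have := mul_nonneg (h0p b hb) (neg_nonneg.mpr hlb)
      linarith
  have hcard : elog2 (S.encard : ℝ≥0∞) = ENNReal.ofReal (Real.logb 2 T.card) := by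
    rw [hSfin.encard_eq_coe_toFinset_card, ← hT, ENat.toENNReal_coe, elog2,
      if_neg (ENNReal.natCast_ne_top _), ENNReal.toReal_natCast _]
  rw [pmfEntropy, hcard, tsum_eq_sum hzero, ← ENNReal.ofReal_sum_of_nonneg hterm]
  apply ENNReal.ofReal_le_ofReal
  have hlog2 : (0:ℝ) < Real.log 2 := Real.log_pos one_lt_two
  have e : ∀ b ∈ T, -(p b * Real.logb 2 (p b)) = -(p b * Real.log (p b)) / Real.log 2 := by
    intro b _
    rw [Real.logb]
    ring
  rw [Finset.sum_congr rfl e, ← Finset.sum_div, Real.logb]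
  gcongr
  exact sum_neg_mul_log_le T p h0p hsum

end AuxLemmas

/-- **Upper bounds on the information loss of a PBF** (ordered chain):
`L(X→Y) ≤ ∫ f_Y(y) log₂ card(g⁻¹[{y}]) dy ≤ log₂(Σᵢ ∫_{𝒴ᵢ} f_Y(y) dy)
 ≤ ess sup_y log₂ card(g⁻¹[{y}]) ≤ log₂ card({𝒳ᵢ})`, where `𝒴ᵢ = g(𝒳ᵢ)`. -/
theorem infoLoss_pbf_upper_bounds
    {α ι I : Type*} [MeasurableSpace α] [Fintype ι] [Countable I]
    (μ : Measure α) [IsProbabilityMeasure μ]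
    (X : α → ι → ℝ) (hX : Measurable X)
    (g : (ι → ℝ) → ι → ℝ) (s : Set (ι → ℝ)) (pieces : I → Set (ι → ℝ))
    (J : (ι → ℝ) → (ι → ℝ) →L[ℝ] (ι → ℝ))
    (hpbf : IsPBF g s pieces J (μ.map X))
    (hac : μ.map X ≪ (volume : Measure (ι → ℝ)))
    (hXs : ∀ a, X a ∈ s) :
    infoLoss μ X (fun a => g (X a)) ≤
        ∫⁻ y, elog2 ((s ∩ g ⁻¹' {y}).encard : ℝ≥0∞) ∂(μ.map fun a => g (X a)) ∧
    (∫⁻ y, elog2 ((s ∩ g ⁻¹' {y}).encard : ℝ≥0∞) ∂(μ.map fun a => g (X a))) ≤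
        elog2 (∑' i : I, (μ.map fun a => g (X a)) (g '' pieces i)) ∧
    elog2 (∑' i : I, (μ.map fun a => g (X a)) (g '' pieces i)) ≤
        essSup (fun y => elog2 ((s ∩ g ⁻¹' {y}).encard : ℝ≥0∞))
          (μ.map fun a => g (X a)) ∧
    essSup (fun y => elog2 ((s ∩ g ⁻¹' {y}).encard : ℝ≥0∞))
          (μ.map fun a => g (X a)) ≤
        elog2 ((Set.univ : Set I).encard : ℝ≥0∞) := by
  classical
  have hg : Measurable g := hpbf.meas
  set Y : α → ι → ℝ := fun a => g (X a) with hYdef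
  have hY : Measurable Y := hg.comp hX
  set η : Measure (ι → ℝ) := μ.map Y with hηdef
  haveI hηprob : IsProbabilityMeasure η := Measure.isProbabilityMeasure_map hY.aemeasurable
  have hYi : ∀ i, MeasurableSet (g '' pieces i) := fun i =>
    (hpbf.measSet i).image_of_measurable_injOn hg (hpbf.injOn i)
  have hcover := hpbf.cover
  have hmem_s : ∀ x, x ∈ s ↔ ∃ i, x ∈ pieces i := by
    intro x; rw [← hcover]; exact Set.mem_iUnion
  have hsmeas : MeasurableSet s := by
    rw [← hcover]; exact MeasurableSet.iUnion hpbf.measSet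
  set N : (ι → ℝ) → ℝ≥0∞ := fun y => ((s ∩ g ⁻¹' {y}).encard : ℝ≥0∞) with hNdef
  have hNsum : ∀ y, N y = ∑' i, (g '' pieces i).indicator (fun _ => (1:ℝ≥0∞)) y := by
    intro y
    have hmeas : ∀ i, MeasurableSet (pieces i ∩ g ⁻¹' {y}) := fun i =>
      (hpbf.measSet i).inter (hg (measurableSet_singleton y))
    have hdecomp : s ∩ g ⁻¹' {y} = ⋃ i, pieces i ∩ g ⁻¹' {y} := by
      rw [← hcover, Set.iUnion_inter]
    have hdisj : Pairwise (Function.onFun Disjoint fun i => pieces i ∩ g ⁻¹' {y}) :=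
      fun i j hij => (hpbf.disj hij).mono Set.inter_subset_left Set.inter_subset_left
    have hcount : ∀ i, Measure.count (pieces i ∩ g ⁻¹' {y}) =
        (g '' pieces i).indicator (fun _ => (1:ℝ≥0∞)) y := by
      intro i
      by_cases hy : y ∈ g '' pieces i
      · obtain ⟨x, hx, rfl⟩ := hy
        have hxeq : pieces i ∩ g ⁻¹' {g x} = {x} := by
          ext x'
          simp only [Set.mem_inter_iff, Set.mem_preimage, Set.mem_singleton_iff]
          constructor
          · rintro ⟨h1, h2⟩
            exact hpbf.injOn i h1 hx h2
          · rintro rfl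
            exact ⟨hx, rfl⟩
        rw [hxeq, Measure.count_singleton,
          Set.indicator_of_mem (Set.mem_image_of_mem g hx)]
      · have hempty : pieces i ∩ g ⁻¹' {y} = ∅ := by
          ext x'
          simp only [Set.mem_inter_iff, Set.mem_preimage, Set.mem_singleton_iff,
            Set.mem_empty_iff_false, iff_false, not_and]
          intro h1 h2
          exact hy ⟨x', h1, h2⟩
        rw [hempty, measure_empty, Set.indicator_of_notMem hy]
    have hNc : N y = Measure.count (s ∩ g ⁻¹' {y}) := by
      rw [Measure.count_apply (hsmeas.inter (hg (measurableSet_singleton y)))]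
    rw [hNc, hdecomp, measure_iUnion hdisj hmeas]
    exact tsum_congr hcount
  have hNmeas : Measurable N := by
    have hfe : N = fun y => ∑' i, (g '' pieces i).indicator (fun _ => (1:ℝ≥0∞)) y :=
      funext hNsum
    rw [hfe]
    exact Measurable.ennreal_tsum fun i => measurable_const.indicator (hYi i)
  have hIntN : ∫⁻ y, N y ∂η = ∑' i, η (g '' pieces i) := by
    calc ∫⁻ y, N y ∂η
        = ∫⁻ y, ∑' i, (g '' pieces i).indicator (fun _ => (1:ℝ≥0∞)) y ∂η :=
          lintegral_congr hNsum
      _ = ∑' i, ∫⁻ y, (g '' pieces i).indicator (fun _ => (1:ℝ≥0∞)) y ∂η :=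
          lintegral_tsum fun i => (measurable_const.indicator (hYi i)).aemeasurable
      _ = ∑' i, η (g '' pieces i) := by
          refine tsum_congr fun i => ?_
          rw [lintegral_indicator (hYi i)]
          simp
  have hNone : ∀ᵐ y ∂η, 1 ≤ N y := by
    have hGm : MeasurableSet (⋃ i, g '' pieces i) := MeasurableSet.iUnion hYi
    have hnull : η ((⋃ i, g '' pieces i)ᶜ) = 0 := by
      rw [hηdef, Measure.map_apply hY hGm.compl]
      have hpre : Y ⁻¹' (⋃ i, g '' pieces i)ᶜ = ∅ := by
        ext a
        simp only [Set.mem_preimage, Set.mem_compl_iff, Set.mem_empty_iff_false, iff_false,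
          not_not]
        obtain ⟨i, hi⟩ := (hmem_s (X a)).mp (hXs a)
        exact Set.mem_iUnion.mpr ⟨i, Set.mem_image_of_mem g hi⟩
      rw [hpre, measure_empty]
    have hmem : ∀ᵐ y ∂η, y ∈ ⋃ i, g '' pieces i := by
      exact ae_iff.mpr hnull
    filter_upwards [hmem] with y hy
    obtain ⟨i, hi⟩ := Set.mem_iUnion.mp hy
    obtain ⟨x, hx, rfl⟩ := hi
    have hne : (s ∩ g ⁻¹' {g x}).Nonempty := ⟨x, (hmem_s x).mpr ⟨i, hx⟩, rfl⟩
    have h1 : 1 ≤ (s ∩ g ⁻¹' {g x}).encard := Set.one_le_encard_iff_nonempty.mpr hne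
    show (1:ℝ≥0∞) ≤ ((s ∩ g ⁻¹' {g x}).encard : ℝ≥0∞)
    exact_mod_cast h1
  -- Conjunct 1
  have hconj1 : infoLoss μ X Y ≤ ∫⁻ y, elog2 (N y) ∂η := by
    refine iSup_le fun n => ?_
    have hquant : Measurable (quant (ι := ι) n) := by
      refine measurable_pi_lambda _ fun i => ?_
      have h1 : Measurable fun x : ι → ℝ => (⌊(2:ℝ)^n * x i⌋ : ℤ) :=
        ((measurable_pi_apply i).const_mul _).floor
      exact (measurable_from_top.comp h1).div_const _
    set Q : α → ι → ℝ := fun a => quant n (X a) with hQdef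
    have hQm : Measurable Q := hquant.comp hX
    set ρ : Measure ((ι → ℝ) × (ι → ℝ)) := μ.map (fun a => (Y a, Q a)) with hρdef
    haveI hρprob : IsProbabilityMeasure ρ :=
      Measure.isProbabilityMeasure_map ((hY.prodMk hQm).aemeasurable)
    have hρfst : ρ.fst = η := by
      rw [hρdef, Measure.fst_map_prodMk hQm]
    set κ := condDistrib Q Y μ with hκdef
    have hcomp : η ⊗ₘ κ = ρ := by
      have h := ρ.disintegrate ρ.condKernel
      rw [hρfst] at h
      rw [hκdef, condDistrib]
      exact h
    set h2 : (ι → ℝ) → (ι → ℝ) × (ι → ℝ) := fun x => (g x, quant n x) with hh2def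
    have hh2m : Measurable h2 := hg.prodMk hquant
    have hh2inj : ∀ i, Set.InjOn h2 (pieces i) := by
      intro i x hx x' hx' hxy
      exact hpbf.injOn i hx hx' (congrArg Prod.fst hxy)
    set F : Set ((ι → ℝ) × (ι → ℝ)) := ⋃ i, h2 '' pieces i with hFdef
    have hFm : MeasurableSet F := MeasurableSet.iUnion fun i =>
      (hpbf.measSet i).image_of_measurable_injOn hh2m (hh2inj i)
    have hρF : ρ Fᶜ = 0 := by
      rw [hρdef, Measure.map_apply (hY.prodMk hQm) hFm.compl]
      have hpre : (fun a => (Y a, Q a)) ⁻¹' Fᶜ = ∅ := by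
        ext a
        simp only [Set.mem_preimage, Set.mem_compl_iff, Set.mem_empty_iff_false, iff_false,
          not_not]
        obtain ⟨i, hi⟩ := (hmem_s (X a)).mp (hXs a)
        exact Set.mem_iUnion.mpr ⟨i, ⟨X a, hi, rfl⟩⟩
      rw [hpre, measure_empty]
    have hslice : ∀ᵐ y ∂η, κ y ((Prod.mk y ⁻¹' F)ᶜ) = 0 := by
      have h0 : (η ⊗ₘ κ) Fᶜ = 0 := by rw [hcomp]; exact hρF
      rw [Measure.compProd_apply hFm.compl] at h0
      have hmeasf : Measurable fun y => κ y (Prod.mk y ⁻¹' Fᶜ) :=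
        Kernel.measurable_kernel_prodMk_left hFm.compl
      have h1 := (lintegral_eq_zero_iff hmeasf).mp h0
      filter_upwards [h1] with y hy
      simpa [Set.preimage_compl] using hy
    have hκy : ∀ᵐ y ∂η, pmfEntropy (κ y) ≤ elog2 (N y) := by
      filter_upwards [hslice] with y hy
      have h1 : pmfEntropy (κ y) ≤ elog2 (((Prod.mk y ⁻¹' F).encard : ℝ≥0∞)) :=
        pmfEntropy_le_elog2_encard (κ y) _ hy
      refine h1.trans (elog2_mono ?_)
      have hsl : Prod.mk y ⁻¹' F = quant n '' (s ∩ g ⁻¹' {y}) := by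
        ext x'
        simp only [hFdef, Set.mem_preimage, Set.mem_iUnion, Set.mem_image, hh2def,
          Prod.mk.injEq, Set.mem_inter_iff, Set.mem_singleton_iff]
        constructor
        · rintro ⟨i, x, hx, hgx, hqx⟩
          exact ⟨x, ⟨(hmem_s x).mpr ⟨i, hx⟩, hgx⟩, hqx⟩
        · rintro ⟨x, ⟨hxs, hgx⟩, hqx⟩
          obtain ⟨i, hi⟩ := (hmem_s x).mp hxs
          exact ⟨i, x, hi, hgx, hqx⟩
      rw [hsl]
      show ((quant n '' (s ∩ g ⁻¹' {y})).encard : ℝ≥0∞) ≤ ((s ∩ g ⁻¹' {y}).encard : ℝ≥0∞)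
      exact_mod_cast Set.encard_image_le _ _
    have hEq : condEntQ μ X Y n = ∫⁻ y, pmfEntropy (κ y) ∂η := rfl
    rw [hEq]
    exact lintegral_mono_ae hκy
  -- Conjunct 2
  have hconj2 : ∫⁻ y, elog2 (N y) ∂η ≤ elog2 (∑' i, η (g '' pieces i)) := by
    rw [← hIntN]
    set c := ∫⁻ y, N y ∂η with hcdef
    rcases eq_or_ne c ⊤ with hctop | hcfin
    · rw [hctop, elog2, if_pos rfl]
      exact le_top
    have hc1 : (1:ℝ≥0∞) ≤ c := by
      rw [hcdef]
      calc (1:ℝ≥0∞) = ∫⁻ _, 1 ∂η := by simp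
        _ ≤ ∫⁻ y, N y ∂η := lintegral_mono_ae hNone
    have hcr1 : 1 ≤ c.toReal := by
      have h := ENNReal.toReal_mono hcfin hc1
      simpa using h
    have hcr0 : (0:ℝ) < c.toReal := lt_of_lt_of_le one_pos hcr1
    have hlog2 : (0:ℝ) < Real.log 2 := Real.log_pos one_lt_two
    have hNlt : ∀ᵐ y ∂η, N y < ⊤ := ae_lt_top hNmeas hcfin
    have hpt : ∀ᵐ y ∂η, elog2 (N y) + ENNReal.ofReal (1 / Real.log 2) ≤
        ENNReal.ofReal (Real.logb 2 c.toReal) +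
          N y * ENNReal.ofReal (1 / (c.toReal * Real.log 2)) := by
      filter_upwards [hNone, hNlt] with y h1 hlt
      have ht1 : 1 ≤ (N y).toReal := by
        have h := ENNReal.toReal_mono hlt.ne h1
        simpa using h
      have ht0 : (0:ℝ) < (N y).toReal := lt_of_lt_of_le one_pos ht1
      have hreal : Real.logb 2 (N y).toReal + 1 / Real.log 2 ≤
          Real.logb 2 c.toReal + (N y).toReal / (c.toReal * Real.log 2) := by
        have hlt1 : Real.log ((N y).toReal / c.toReal) ≤ (N y).toReal / c.toReal - 1 :=
          Real.log_le_sub_one_of_pos (by positivity)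
        rw [Real.log_div (ne_of_gt ht0) (ne_of_gt hcr0)] at hlt1
        have key : Real.log (N y).toReal + 1 ≤
            Real.log c.toReal + (N y).toReal / c.toReal := by linarith
        calc Real.logb 2 (N y).toReal + 1 / Real.log 2
            = (Real.log (N y).toReal + 1) / Real.log 2 := by rw [Real.logb]; ring
          _ ≤ (Real.log c.toReal + (N y).toReal / c.toReal) / Real.log 2 := by gcongr
          _ = Real.logb 2 c.toReal + (N y).toReal / (c.toReal * Real.log 2) := by
              rw [Real.logb]; ring
      have helog : elog2 (N y) = ENNReal.ofReal (Real.logb 2 (N y).toReal) := by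
        rw [elog2, if_neg hlt.ne]
      have hmul : N y * ENNReal.ofReal (1 / (c.toReal * Real.log 2)) =
          ENNReal.ofReal ((N y).toReal / (c.toReal * Real.log 2)) := by
        conv_lhs => rw [← ENNReal.ofReal_toReal hlt.ne]
        rw [← ENNReal.ofReal_mul ENNReal.toReal_nonneg, mul_one_div]
      rw [helog, hmul,
        ← ENNReal.ofReal_add (Real.logb_nonneg one_lt_two ht1) (by positivity),
        ← ENNReal.ofReal_add (Real.logb_nonneg one_lt_two hcr1) (by positivity)]
      exact ENNReal.ofReal_le_ofReal hreal
    have hint1 : ∫⁻ y, (elog2 (N y) + ENNReal.ofReal (1 / Real.log 2)) ∂η =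
        (∫⁻ y, elog2 (N y) ∂η) + ENNReal.ofReal (1 / Real.log 2) := by
      rw [lintegral_add_right _ measurable_const, lintegral_const, measure_univ, mul_one]
    have hint2 : ∫⁻ y, (ENNReal.ofReal (Real.logb 2 c.toReal) +
        N y * ENNReal.ofReal (1 / (c.toReal * Real.log 2))) ∂η =
        ENNReal.ofReal (Real.logb 2 c.toReal) +
          c * ENNReal.ofReal (1 / (c.toReal * Real.log 2)) := by
      rw [lintegral_add_left measurable_const, lintegral_const, measure_univ, mul_one,
        lintegral_mul_const _ hNmeas]
    have hc2 : c * ENNReal.ofReal (1 / (c.toReal * Real.log 2)) =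
        ENNReal.ofReal (1 / Real.log 2) := by
      conv_lhs => rw [← ENNReal.ofReal_toReal hcfin]
      rw [← ENNReal.ofReal_mul ENNReal.toReal_nonneg]
      congr 1
      field_simp
      rw [ENNReal.toReal_ofReal ENNReal.toReal_nonneg, div_self hcr0.ne']
    have hmain : (∫⁻ y, elog2 (N y) ∂η) + ENNReal.ofReal (1 / Real.log 2) ≤
        ENNReal.ofReal (Real.logb 2 c.toReal) + ENNReal.ofReal (1 / Real.log 2) := by
      rw [← hint1]
      calc ∫⁻ y, (elog2 (N y) + ENNReal.ofReal (1 / Real.log 2)) ∂η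
          ≤ ∫⁻ y, (ENNReal.ofReal (Real.logb 2 c.toReal) +
              N y * ENNReal.ofReal (1 / (c.toReal * Real.log 2))) ∂η :=
            lintegral_mono_ae hpt
        _ = _ := by rw [hint2, hc2]
    have hfinal := (ENNReal.add_le_add_iff_right ENNReal.ofReal_ne_top).mp hmain
    rw [elog2, if_neg hcfin]
    exact hfinal
  -- Conjunct 3
  have hconj3 : elog2 (∑' i, η (g '' pieces i)) ≤ essSup (fun y => elog2 (N y)) η := by
    set M := essSup (fun y => elog2 (N y)) η with hMdef
    rcases eq_or_ne M ⊤ with htop | hMfin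
    · rw [htop]; exact le_top
    have hae := ae_le_essSup (μ := η) (f := fun y => elog2 (N y))
    rw [← hMdef] at hae
    have hC1 : (1:ℝ≥0∞) ≤ ENNReal.ofReal ((2:ℝ) ^ M.toReal) := by
      rw [← ENNReal.ofReal_one]
      apply ENNReal.ofReal_le_ofReal
      calc (1:ℝ) = (2:ℝ) ^ (0:ℝ) := (Real.rpow_zero 2).symm
        _ ≤ (2:ℝ) ^ M.toReal :=
          Real.rpow_le_rpow_of_exponent_le one_le_two ENNReal.toReal_nonneg
    have hbound : ∀ᵐ y ∂η, N y ≤ ENNReal.ofReal ((2:ℝ) ^ M.toReal) := by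
      filter_upwards [hae] with y hy
      rcases le_or_gt (N y) 1 with h | h
      · exact h.trans hC1
      · have hne : N y ≠ ⊤ := by
          intro htop'
          rw [htop', elog2, if_pos rfl] at hy
          exact hMfin (top_le_iff.mp hy)
        have ht1 : 1 < (N y).toReal := by
          have h' := ENNReal.toReal_strict_mono hne h
          simpa using h'
        rw [elog2, if_neg hne] at hy
        have hlogle : Real.logb 2 (N y).toReal ≤ M.toReal :=
          (ENNReal.ofReal_le_iff_le_toReal hMfin).mp hy
        have hle : (N y).toReal ≤ (2:ℝ) ^ M.toReal :=
          (Real.logb_le_iff_le_rpow one_lt_two (by linarith)).mp hlogle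
        calc N y = ENNReal.ofReal (N y).toReal := (ENNReal.ofReal_toReal hne).symm
          _ ≤ _ := ENNReal.ofReal_le_ofReal hle
    have hsum_le : (∑' i, η (g '' pieces i)) ≤ ENNReal.ofReal ((2:ℝ) ^ M.toReal) := by
      rw [← hIntN]
      calc ∫⁻ y, N y ∂η ≤ ∫⁻ _, ENNReal.ofReal ((2:ℝ) ^ M.toReal) ∂η :=
            lintegral_mono_ae hbound
        _ = ENNReal.ofReal ((2:ℝ) ^ M.toReal) := by
            rw [lintegral_const, measure_univ, mul_one]
    refine (elog2_mono hsum_le).trans ?_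
    rw [elog2, if_neg ENNReal.ofReal_ne_top,
      ENNReal.toReal_ofReal (Real.rpow_nonneg (by norm_num) _),
      Real.logb_rpow (by norm_num) (by norm_num)]
    exact ENNReal.ofReal_toReal_le
  -- Conjunct 4
  have hconj4 : essSup (fun y => elog2 (N y)) η ≤
      elog2 ((Set.univ : Set I).encard : ℝ≥0∞) := by
    refine essSup_le_of_ae_le _ (ae_of_all _ fun y => ?_)
    apply elog2_mono
    show ((s ∩ g ⁻¹' {y}).encard : ℝ≥0∞) ≤ ((Set.univ : Set I).encard : ℝ≥0∞)
    refine ENat.toENNReal_le.mpr ?_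
    rcases isEmpty_or_nonempty I with hI | hI
    · have hs0 : s = ∅ := by rw [← hcover]; simp
      simp [hs0]
    · have hmap : ∀ x ∈ s ∩ g ⁻¹' {y}, ∃ i, x ∈ pieces i := fun x hx => (hmem_s x).mp hx.1
      set f : (ι → ℝ) → I := fun x =>
        if hx : ∃ i, x ∈ pieces i then hx.choose else Classical.arbitrary I with hfdef
      refine Set.encard_le_encard_of_injOn (fun x _ => Set.mem_univ (f x)) ?_
      intro x hx x' hx' hff
      have hxi : x ∈ pieces (f x) := by
        rw [hfdef]; dsimp only; rw [dif_pos (hmap x hx)]; exact (hmap x hx).choose_spec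
      have hx'i : x' ∈ pieces (f x') := by
        rw [hfdef]; dsimp only; rw [dif_pos (hmap x' hx')]; exact (hmap x' hx').choose_spec
      rw [hff] at hxi
      have hgx : g x = g x' := by
        have e1 : g x = y := hx.2
        have e2 : g x' = y := hx'.2
        rw [e1, e2]
      exact hpbf.injOn (f x') hxi hx'i hgx
  exact ⟨hconj1, hconj2, hconj3, hconj4⟩
end
end
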